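/- arXiv:1809.00760 — 3 statements merged into one kernel-verified Lean document; each statement's English description precedes it below -/
import Mathlib

section
/- For every n ∈ ℕ the number of self-avoiding walks on ℤ² of length n that begin at the origin satisfies |SAW_n| ≤ Σ_{k=0}^{n} |HSW_{k+1}| · |HSW_{n−k}|, where HSW_m denotes the set of half-space self-avoiding walks of length m. -/
/-- A self-avoiding walk of length `n` on `ℤ²`, starting at the origin, with
nearest-neighbour steps, padded to be constant after time `n`. -/
def IsSAW (n : ℕ) (γ : ℕ → ℤ × ℤ) : Prop :=
  γ 0 = (0, 0) ∧
  (∀ i < n, |(γ (i + 1)).1 - (γ i).1| + |(γ (i + 1)).2 - (γ i).2| = 1) ∧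
  (∀ i ≤ n, ∀ j ≤ n, γ i = γ j → i = j) ∧
  (∀ i, n ≤ i → γ i = γ n)

/-- The number of self-avoiding walks of length `n` on `ℤ²` starting at the origin. -/
noncomputable def cSAW (n : ℕ) : ℕ := Nat.card {γ : ℕ → ℤ × ℤ // IsSAW n γ}

/-- The connective constant `μ` of `ℤ²`, i.e. `lim_n cSAW n ^ (1/n)`, which by
submultiplicativity equals the infimum `⨅_{n ≥ 1} (cSAW n)^(1/n)`. -/
noncomputable def mu : ℝ := ⨅ n : ℕ, ((cSAW (n + 1) : ℝ)) ^ ((1 : ℝ) / (n + 1))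

/-- A self-avoiding bridge of length `n` on `ℤ²`: a self-avoiding walk `γ` from the
origin with `0 < y(γ k) ≤ y(γ n)` for all `1 ≤ k ≤ n`. -/
def IsBridge (n : ℕ) (γ : ℕ → ℤ × ℤ) : Prop :=
  IsSAW n γ ∧ ∀ k : ℕ, 0 < k → k ≤ n → 0 < (γ k).2 ∧ (γ k).2 ≤ (γ n).2

/-- The number of self-avoiding bridges of length `n` on `ℤ²`. -/
noncomputable def cSAB (n : ℕ) : ℕ := Nat.card {γ : ℕ → ℤ × ℤ // IsBridge n γ}

/-- A half-space self-avoiding walk of length `n` on `ℤ²`: a self-avoiding walk `γ`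
from the origin with `y(γ k) > 0` for all `0 < k ≤ n`. -/
def IsHSW (n : ℕ) (γ : ℕ → ℤ × ℤ) : Prop :=
  IsSAW n γ ∧ ∀ k : ℕ, 0 < k → k ≤ n → 0 < (γ k).2

/-- The number of half-space self-avoiding walks of length `n` on `ℤ²`. -/
noncomputable def cHSW (n : ℕ) : ℕ := Nat.card {γ : ℕ → ℤ × ℤ // IsHSW n γ}

-- finiteness
lemma saw_finite (n : ℕ) : Finite {γ : ℕ → ℤ × ℤ // IsSAW n γ} := by
  classical
  let S : Finset (ℤ × ℤ) := {(1,0), (-1,0), (0,1), (0,-1)}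
  have hf : ∀ (γ : {γ : ℕ → ℤ × ℤ // IsSAW n γ}) (i : Fin n),
      (γ.1 (i+1) - γ.1 i) ∈ S := by
    intro ⟨γ, h0, hstep, hinj, hpad⟩ i
    have := hstep i i.2
    simp only [S, Finset.mem_insert, Finset.mem_singleton, Prod.ext_iff, Prod.fst_sub,
      Prod.snd_sub]
    rcases abs_cases ((γ (↑i + 1)).1 - (γ ↑i).1) with ⟨h1, h2⟩|⟨h1,h2⟩ <;>
      rcases abs_cases ((γ (↑i + 1)).2 - (γ ↑i).2) with ⟨h3,h4⟩|⟨h3,h4⟩ <;> omega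
  have : Function.Injective (fun γ : {γ : ℕ → ℤ × ℤ // IsSAW n γ} =>
      (fun i : Fin n => (⟨γ.1 (i+1) - γ.1 i, hf γ i⟩ : S))) := by
    intro ⟨γ, h0, hstep, hinj, hpad⟩ ⟨γ', h0', hstep', hinj', hpad'⟩ h
    simp only [Subtype.mk.injEq] at h ⊢
    have key : ∀ i ≤ n, γ i = γ' i := by
      intro i hi
      induction i with
      | zero => rw [h0, h0']
      | succ m ih =>
        have hm : m < n := hi
        have := congrFun h ⟨m, hm⟩
        simp only [Subtype.mk.injEq] at this
        have hmm := ih (le_of_lt hm)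
        have : γ (m+1) - γ m = γ' (m+1) - γ' m := this
        rw [hmm] at this
        exact sub_left_inj.mp this
    refine Subtype.ext (show γ = γ' from ?_)
    funext i
    rcases le_or_gt i n with hi | hi
    · exact key i hi
    · rw [hpad i hi.le, hpad' i hi.le, key n le_rfl]
  exact Finite.of_injective _ this

lemma hsw_finite (n : ℕ) : Finite {γ : ℕ → ℤ × ℤ // IsHSW n γ} := by
  have := saw_finite n
  exact Finite.of_injective (fun γ : {γ // IsHSW n γ} => (⟨γ.1, γ.2.1⟩ : {γ // IsSAW n γ}))
    (fun a b h => Subtype.ext (by simpa using congrArg Subtype.val h))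

open Classical in
/-- the last index `≤ n` at which `γ` attains its minimal `y`-coordinate. -/
noncomputable def kIdx (n : ℕ) (γ : ℕ → ℤ × ℤ) : ℕ :=
  Nat.findGreatest (fun i => ∀ j ≤ n, (γ i).2 ≤ (γ j).2) n

lemma kIdx_le (n : ℕ) (γ : ℕ → ℤ × ℤ) : kIdx n γ ≤ n := Nat.findGreatest_le n

lemma kIdx_min (n : ℕ) (γ : ℕ → ℤ × ℤ) : ∀ j ≤ n, (γ (kIdx n γ)).2 ≤ (γ j).2 := by
  classical
  obtain ⟨i, hi, hmin⟩ := Finset.exists_min_image (Finset.range (n+1))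
    (fun j => (γ j).2) ⟨0, Finset.mem_range.mpr (Nat.succ_pos n)⟩
  have hi' : i ≤ n := Nat.lt_succ_iff.mp (Finset.mem_range.mp hi)
  have hPi : ∀ j ≤ n, (γ i).2 ≤ (γ j).2 := fun j hj =>
    hmin j (Finset.mem_range.mpr (Nat.lt_succ_of_le hj))
  exact Nat.findGreatest_spec (P := fun i => ∀ j ≤ n, (γ i).2 ≤ (γ j).2) hi' hPi

lemma kIdx_lt (n : ℕ) (γ : ℕ → ℤ × ℤ) : ∀ i, kIdx n γ < i → i ≤ n →
    (γ (kIdx n γ)).2 < (γ i).2 := by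
  classical
  intro i hki hin
  have hnP : ¬ (∀ j ≤ n, (γ i).2 ≤ (γ j).2) :=
    Nat.findGreatest_is_greatest (P := fun i => ∀ j ≤ n, (γ i).2 ≤ (γ j).2) hki hin
  push_neg at hnP
  obtain ⟨j, hj, hlt⟩ := hnP
  exact lt_of_le_of_lt (kIdx_min n γ j hj) hlt

/-- reversed initial piece with a downward edge appended, translated. -/
noncomputable def eps (n : ℕ) (γ : ℕ → ℤ × ℤ) : ℕ → ℤ × ℤ :=
  fun j => if j = 0 then (0, 0)
    else γ (kIdx n γ + 1 - min j (kIdx n γ + 1)) - γ (kIdx n γ) + (0, 1)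

/-- final piece, translated. -/
noncomputable def del (n : ℕ) (γ : ℕ → ℤ × ℤ) : ℕ → ℤ × ℤ :=
  fun j => γ (min (kIdx n γ + j) n) - γ (kIdx n γ)

lemma eps_hsw (n : ℕ) (γ : ℕ → ℤ × ℤ) (h : IsSAW n γ) :
    IsHSW (kIdx n γ + 1) (eps n γ) := by
  obtain ⟨h0, hstep, hinj, hpad⟩ := h
  set k := kIdx n γ with hk
  have hkn : k ≤ n := kIdx_le n γ
  constructor
  · refine ⟨by simp [eps], ?_, ?_, ?_⟩
    · -- steps
      intro i hi
      rcases Nat.eq_zero_or_pos i with rfl | hpos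
      · simp only [eps, ← hk, if_pos rfl, if_neg one_ne_zero]
        have : min 1 (k+1) = 1 := min_eq_left (by omega)
        rw [this]
        simp only [Nat.add_sub_cancel, Prod.fst_add, Prod.fst_sub, Prod.snd_add, Prod.snd_sub]
        simp
      · have h1 : min (i+1) (k+1) = i+1 := min_eq_left (by omega)
        have h2 : min i (k+1) = i := min_eq_left (by omega)
        simp only [eps, ← hk, if_neg (by omega : i + 1 ≠ 0), if_neg (by omega : i ≠ 0), h1, h2]
        have e1 : k + 1 - (i+1) = k - i := by omega
        have e2 : k + 1 - i = (k - i) + 1 := by omega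
        rw [e1, e2]
        have := hstep (k - i) (by omega)
        simp only [Prod.fst_add, Prod.fst_sub, Prod.snd_add, Prod.snd_sub]
        rw [show (γ (k-i)).1 - (γ k).1 + 0 - ((γ (k - i + 1)).1 - (γ k).1 + 0)
            = -((γ (k-i+1)).1 - (γ (k-i)).1) by ring,
          show (γ (k-i)).2 - (γ k).2 + 1 - ((γ (k - i + 1)).2 - (γ k).2 + 1)
            = -((γ (k-i+1)).2 - (γ (k-i)).2) by ring, abs_neg, abs_neg]
        exact this
    · -- injectivity
      intro i hi j hj hij
      have key : ∀ a, 0 < a → a ≤ k + 1 → eps n γ a ≠ (0,0) := by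
        intro a ha hak heq
        have hm : min a (k+1) = a := min_eq_left hak
        simp only [eps, ← hk, if_neg (by omega : a ≠ 0), hm] at heq
        have h2 := congrArg Prod.snd heq
        simp only [Prod.snd_add, Prod.snd_sub] at h2
        have hidx : k + 1 - a ≤ n := by omega
        have := kIdx_min n γ (k + 1 - a) hidx
        rw [← hk] at this
        omega
      rcases Nat.eq_zero_or_pos i with rfl | hip
      · rcases Nat.eq_zero_or_pos j with rfl | hjp
        · rfl
        · exact absurd (by simpa [eps] using hij.symm) (key j hjp hj)
      · rcases Nat.eq_zero_or_pos j with rfl | hjp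
        · exact absurd (by simpa [eps] using hij) (key i hip hi)
        · simp only [eps, ← hk, if_neg (by omega : i ≠ 0), if_neg (by omega : j ≠ 0),
            min_eq_left hi, min_eq_left hj] at hij
          have : γ (k + 1 - i) = γ (k + 1 - j) := by
            have := (add_left_inj _).mp hij
            exact sub_left_inj.mp this
          have := hinj (k+1-i) (by omega) (k+1-j) (by omega) this
          omega
    · -- padding
      intro i hi
      have : i ≠ 0 := by omega
      simp only [eps, ← hk, if_neg this, if_neg (by omega : k + 1 ≠ 0),
        min_eq_right hi, min_eq_right (le_refl (k+1))]
  · -- positivity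
    intro j hj hjk
    simp only [eps, ← hk, if_neg (by omega : j ≠ 0), min_eq_left hjk, Prod.snd_add, Prod.snd_sub]
    have := kIdx_min n γ (k + 1 - j) (by omega)
    rw [← hk] at this
    omega

lemma del_hsw (n : ℕ) (γ : ℕ → ℤ × ℤ) (h : IsSAW n γ) :
    IsHSW (n - kIdx n γ) (del n γ) := by
  obtain ⟨h0, hstep, hinj, hpad⟩ := h
  set k := kIdx n γ with hk
  have hkn : k ≤ n := kIdx_le n γ
  constructor
  · refine ⟨?_, ?_, ?_, ?_⟩
    · simp only [del, ← hk, Nat.add_zero, min_eq_left hkn, sub_self, Prod.mk_zero_zero]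
    · intro i hi
      have h1 : min (k + (i+1)) n = k + (i+1) := min_eq_left (by omega)
      have h2 : min (k + i) n = k + i := min_eq_left (by omega)
      simp only [del, ← hk, h1, h2, Prod.fst_sub, Prod.snd_sub]
      rw [show (γ (k + (i+1))).1 - (γ k).1 - ((γ (k+i)).1 - (γ k).1)
          = (γ (k + i + 1)).1 - (γ (k+i)).1 by rw [show k + (i+1) = k + i + 1 by ring]; ring,
        show (γ (k + (i+1))).2 - (γ k).2 - ((γ (k+i)).2 - (γ k).2)
          = (γ (k + i + 1)).2 - (γ (k+i)).2 by rw [show k + (i+1) = k + i + 1 by ring]; ring]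
      exact hstep (k + i) (by omega)
    · intro i hi j hj hij
      simp only [del, ← hk, min_eq_left (by omega : k + i ≤ n),
        min_eq_left (by omega : k + j ≤ n)] at hij
      have := hinj (k+i) (by omega) (k+j) (by omega) (sub_left_inj.mp hij)
      omega
    · intro i hi
      simp only [del, ← hk, min_eq_right (by omega : n ≤ k + i),
        min_eq_right (by omega : n ≤ k + (n - k))]
  · intro j hj hjn
    simp only [del, ← hk, min_eq_left (by omega : k + j ≤ n), Prod.snd_sub]
    have := kIdx_lt n γ (k + j) (by omega) (by omega)
    rw [← hk] at this
    omega

/-- Decomposition at the final lowest point: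
`|SAW_n| ≤ Σ_{k=0}^{n} |HSW_{k+1}| · |HSW_{n−k}|`. -/
theorem saw_le_sum_hsw (n : ℕ) :
    cSAW n ≤ ∑ k ∈ Finset.range (n + 1), cHSW (k + 1) * cHSW (n - k) := by
  classical
  haveI hfin : ∀ m, Finite {γ : ℕ → ℤ × ℤ // IsHSW m γ} := hsw_finite
  let B : Fin (n+1) → Type := fun k =>
    {γ : ℕ → ℤ × ℤ // IsHSW (k + 1) γ} × {γ : ℕ → ℤ × ℤ // IsHSW (n - k) γ}
  haveI : ∀ k : Fin (n+1), Finite (B k) := fun k => by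
    have := hfin ((k : ℕ) + 1); have := hfin (n - (k : ℕ))
    exact inferInstance
  let F : {γ : ℕ → ℤ × ℤ // IsSAW n γ} → Σ k : Fin (n+1), B k := fun γ =>
    ⟨⟨kIdx n γ.1, Nat.lt_succ_of_le (kIdx_le n γ.1)⟩,
      (⟨eps n γ.1, eps_hsw n γ.1 γ.2⟩, ⟨del n γ.1, del_hsw n γ.1 γ.2⟩)⟩
  have hF : Function.Injective F := by
    rintro ⟨γ, hγ⟩ ⟨γ', hγ'⟩ hab
    have hk : kIdx n γ = kIdx n γ' :=
      congrArg (fun s : (Σ k : Fin (n+1), B k) => (s.1 : Fin (n+1)).val) hab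
    have he : eps n γ = eps n γ' :=
      congrArg (fun s : (Σ k : Fin (n+1), B k) => (s.2.1.1 : ℕ → ℤ × ℤ)) hab
    have hd : del n γ = del n γ' :=
      congrArg (fun s : (Σ k : Fin (n+1), B k) => (s.2.2.1 : ℕ → ℤ × ℤ)) hab
    obtain ⟨h0, hstep, hinj, hpad⟩ := hγ
    obtain ⟨h0', hstep', hinj', hpad'⟩ := hγ'
    set k := kIdx n γ with hkdef
    have hkn : k ≤ n := kIdx_le n γ
    -- value at the minimum
    have hmin : γ k = γ' k := by
      have := congrFun he (k + 1)
      simp only [eps, ← hkdef, ← hk, if_neg (by omega : k + 1 ≠ 0),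
        min_eq_left (le_refl (k+1)), Nat.sub_self, h0, h0'] at this
      exact sub_right_inj.mp (add_right_cancel this)
    have key : ∀ i, γ i = γ' i := by
      have low : ∀ i ≤ k, γ i = γ' i := by
        intro i hi
        have := congrFun he (k + 1 - i)
        have hne : k + 1 - i ≠ 0 := by omega
        have hmn : min (k + 1 - i) (k + 1) = k + 1 - i := min_eq_left (by omega)
        simp only [eps, ← hkdef, ← hk, if_neg hne, hmn] at this
        rw [show k + 1 - (k + 1 - i) = i by omega] at this
        have h2 := add_right_cancel this
        rw [hmin] at h2
        exact sub_left_inj.mp h2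
      have high : ∀ i, k ≤ i → i ≤ n → γ i = γ' i := by
        intro i hki hin
        have := congrFun hd (i - k)
        simp only [del, ← hkdef, ← hk, min_eq_left (by omega : k + (i - k) ≤ n)] at this
        rw [show k + (i - k) = i by omega, hmin] at this
        exact sub_left_inj.mp this
      intro i
      rcases le_or_gt i k with hi | hi
      · exact low i hi
      rcases le_or_gt i n with hin | hin
      · exact high i hi.le hin
      · rw [hpad i hin.le, hpad' i hin.le, high n hkn le_rfl]
    exact Subtype.ext (funext key)
  haveI : Finite (Σ k : Fin (n+1), B k) := Finite.instSigma
  have h1 : cSAW n ≤ Nat.card (Σ k : Fin (n+1), B k) :=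
    Nat.card_le_card_of_injective F hF
  have h2 : Nat.card (Σ k : Fin (n+1), B k)
      = ∑ k ∈ Finset.range (n+1), cHSW (k + 1) * cHSW (n - k) := by
    haveI instB : ∀ k : Fin (n+1), Fintype (B k) := fun k => Fintype.ofFinite _
    rw [Nat.card_eq_fintype_card, Fintype.card_sigma,
      ← Fin.sum_univ_eq_sum_range (fun k => cHSW (k+1) * cHSW (n-k)) (n+1)]
    refine Finset.sum_congr rfl fun k _ => ?_
    have : Fintype.card (B k) = Nat.card (B k) := (Nat.card_eq_fintype_card).symm
    rw [this, Nat.card_prod]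
    rfl
  omega
end

section
/- There exists a constant C > 0 such that for all n ∈ ℕ, |HSW_n| ≤ exp(C·n^{1/2}) · μ^n, where HSW_n is the set of half-space self-avoiding walks of length n on ℤ² and μ is the connective constant. -/
namespace HW
def concatW (m : ℕ) (β δ : ℕ → ℤ × ℤ) : ℕ → ℤ × ℤ :=
  fun k => if k ≤ m then β k else δ (k - m) + β m

lemma concatW_of_le {m k : ℕ} {β δ : ℕ → ℤ × ℤ} (hk : k ≤ m) : concatW m β δ k = β k :=
  if_pos hk

lemma concatW_of_ge {m k : ℕ} {β δ : ℕ → ℤ × ℤ} (h0 : δ 0 = (0, 0)) (hk : m ≤ k) :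
    concatW m β δ k = δ (k - m) + β m := by
  rcases eq_or_lt_of_le hk with rfl | h
  · simp [concatW, h0]
  · simp [concatW, Nat.not_le.2 h]

lemma bridge_y_nonneg {n : ℕ} {β : ℕ → ℤ × ℤ} (h : IsBridge n β) (k : ℕ) (hk : k ≤ n) :
    0 ≤ (β k).2 := by
  rcases Nat.eq_zero_or_pos k with rfl | hk0
  · simp [h.1.1]
  · exact le_of_lt (h.2 k hk0 hk).1

lemma bridge_end_nonneg {n : ℕ} {β : ℕ → ℤ × ℤ} (h : IsBridge n β) : 0 ≤ (β n).2 :=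
  bridge_y_nonneg h n le_rfl

lemma _root_.IsBridge.concat {m n : ℕ} {β δ : ℕ → ℤ × ℤ} (hβ : IsBridge m β) (hδ : IsBridge n δ) :
    IsBridge (m + n) (concatW m β δ) := by
  obtain ⟨⟨b0, bstep, binj, bpad⟩, bh⟩ := hβ
  obtain ⟨⟨d0, dstep, dinj, dpad⟩, dh⟩ := hδ
  have hge : ∀ k, m ≤ k → concatW m β δ k = δ (k - m) + β m := fun k hk =>
    concatW_of_ge d0 hk
  have hyfirst : ∀ k ≤ m, (β k).2 ≤ (β m).2 := by
    intro k hk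
    rcases Nat.eq_zero_or_pos k with rfl | hk0
    · rw [b0]; exact bridge_y_nonneg ⟨⟨b0, bstep, binj, bpad⟩, bh⟩ m le_rfl
    · exact (bh k hk0 hk).2
  have hysecond : ∀ k, m < k → k ≤ m + n → (β m).2 < (concatW m β δ k).2 := by
    intro k hk hkn
    rw [hge k (le_of_lt hk)]
    have : 0 < (δ (k - m)).2 := (dh (k - m) (by omega) (by omega)).1
    simp only [Prod.snd_add]
    omega
  have hend : (concatW m β δ (m + n)).2 = (δ n).2 + (β m).2 := by
    rw [hge (m + n) (by omega)]; simp
  constructor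
  · refine ⟨by rw [concatW_of_le (Nat.zero_le m)]; exact b0, fun i hi => ?_,
      fun i hi j hj hij => ?_, fun i hi => ?_⟩
    · rcases Nat.lt_or_ge i m with him | him
      · rw [concatW_of_le (by omega), concatW_of_le (by omega)]
        exact bstep i him
      · rw [hge (i + 1) (by omega), hge i him]
        have e : i + 1 - m = (i - m) + 1 := by omega
        rw [e]
        simp only [Prod.fst_add, Prod.snd_add]
        have := dstep (i - m) (by omega)
        convert this using 3 <;> ring
    · rcases le_or_gt i m with him | him <;> rcases le_or_gt j m with hjm | hjm
      · rw [concatW_of_le him, concatW_of_le hjm] at hij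
        exact binj i him j hjm hij
      · exfalso
        have h1 : (concatW m β δ i).2 ≤ (β m).2 := by
          rw [concatW_of_le him]; exact hyfirst i him
        have h2 := hysecond j hjm hj
        rw [hij] at h1; omega
      · exfalso
        have h1 : (concatW m β δ j).2 ≤ (β m).2 := by
          rw [concatW_of_le hjm]; exact hyfirst j hjm
        have h2 := hysecond i him hi
        rw [← hij] at h1; omega
      · rw [hge i (by omega), hge j (by omega)] at hij
        have : δ (i - m) = δ (j - m) := by
          have := add_right_cancel hij; exact this
        have := dinj (i - m) (by omega) (j - m) (by omega) this
        omega
    · rw [hge i (by omega), hge (m + n) (by omega)]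
      rw [dpad (i - m) (by omega)]
      congr 2
      omega
  · intro k hk0 hkn
    rcases le_or_gt k m with hkm | hkm
    · have h1 := (bh k hk0 hkm).1
      have h2 := hyfirst k hkm
      have h3 : 0 ≤ (δ n).2 := bridge_y_nonneg ⟨⟨d0, dstep, dinj, dpad⟩, dh⟩ n le_rfl
      rw [concatW_of_le hkm, hend]
      constructor <;> omega
    · have h1 := hysecond k hkm hkn
      have h0 : 0 ≤ (β m).2 := bridge_y_nonneg ⟨⟨b0, bstep, binj, bpad⟩, bh⟩ m le_rfl
      have h2 : (δ (k - m)).2 ≤ (δ n).2 := (dh (k - m) (by omega) (by omega)).2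
      rw [hge k (by omega)] at h1 ⊢
      rw [hend]
      simp only [Prod.snd_add] at h1 ⊢
      constructor <;> omega



lemma step_cases {p : ℤ × ℤ} (h : |p.1| + |p.2| = 1) :
    p = (1, 0) ∨ p = (-1, 0) ∨ p = (0, 1) ∨ p = (0, -1) := by
  obtain ⟨a, b⟩ := p
  simp only [Prod.mk.injEq] at *
  rcases abs_cases a with ⟨h1, h2⟩ | ⟨h1, h2⟩ <;> rcases abs_cases b with ⟨h3, h4⟩ | ⟨h3, h4⟩ <;>
    omega

def stepSet : Finset (ℤ × ℤ) := {(1, 0), (-1, 0), (0, 1), (0, -1)}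

lemma saw_eq_of_steps_eq {n : ℕ} {γ γ' : ℕ → ℤ × ℤ} (h : IsSAW n γ) (h' : IsSAW n γ')
    (hs : ∀ i < n, γ (i + 1) - γ i = γ' (i + 1) - γ' i) : γ = γ' := by
  have key : ∀ k ≤ n, γ k = γ' k := by
    intro k hk
    induction k with
    | zero => rw [h.1, h'.1]
    | succ k ih =>
      have hk' : k ≤ n := by omega
      have e := hs k (by omega)
      have := ih hk'
      have : γ (k + 1) = γ' (k + 1) := by
        have : γ (k + 1) - γ k = γ' (k + 1) - γ' k := e
        rw [ih hk'] at this
        exact sub_left_injective this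
      exact this
  funext k
  rcases le_or_gt k n with hk | hk
  · exact key k hk
  · rw [h.2.2.2 k (by omega), h'.2.2.2 k (by omega), key n le_rfl]

instance sawFinite (n : ℕ) : Finite {γ : ℕ → ℤ × ℤ // IsSAW n γ} := by
  have : ∀ (γ : {γ : ℕ → ℤ × ℤ // IsSAW n γ}) (i : Fin n),
      γ.1 (i + 1) - γ.1 i ∈ stepSet := by
    intro γ i
    have := γ.2.2.1 i i.2
    have hc := step_cases (p := γ.1 (i + 1) - γ.1 i) (by simpa using this)
    simp only [stepSet, Finset.mem_insert, Finset.mem_singleton]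
    tauto
  apply Finite.of_injective (fun γ => (fun i : Fin n => (⟨γ.1 (i + 1) - γ.1 i, this γ i⟩ :
    stepSet)))
  intro γ γ' he
  apply Subtype.ext
  apply saw_eq_of_steps_eq γ.2 γ'.2
  intro i hi
  have := congrFun he ⟨i, hi⟩
  simpa using this

instance bridgeFinite (n : ℕ) : Finite {γ : ℕ → ℤ × ℤ // IsBridge n γ} :=
  Finite.of_injective (fun γ => (⟨γ.1, γ.2.1⟩ : {γ : ℕ → ℤ × ℤ // IsSAW n γ}))
    (by intro a b h; simp only [Subtype.mk.injEq] at h; exact Subtype.ext h)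

instance hswFinite (n : ℕ) : Finite {γ : ℕ → ℤ × ℤ // IsHSW n γ} :=
  Finite.of_injective (fun γ => (⟨γ.1, γ.2.1⟩ : {γ : ℕ → ℤ × ℤ // IsSAW n γ}))
    (by intro a b h; simp only [Subtype.mk.injEq] at h; exact Subtype.ext h)

def trunc (m : ℕ) (γ : ℕ → ℤ × ℤ) : ℕ → ℤ × ℤ := fun k => γ (min k m)
def shiftW (m n : ℕ) (γ : ℕ → ℤ × ℤ) : ℕ → ℤ × ℤ := fun k => γ (min k n + m) - γ m

lemma trunc_concat {m : ℕ} {β δ : ℕ → ℤ × ℤ} (hβ : IsSAW m β) (k : ℕ) :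
    trunc m (concatW m β δ) k = β k := by
  rcases le_or_gt k m with hk | hk
  · simp [trunc, concatW, min_eq_left hk, hk]
  · rw [trunc, min_eq_right (le_of_lt hk), concatW, if_pos le_rfl, hβ.2.2.2 k (by omega)]

lemma shift_concat {m n : ℕ} {β δ : ℕ → ℤ × ℤ} (hδ : IsSAW n δ) (k : ℕ) :
    shiftW m n (concatW m β δ) k = δ k := by
  have h0 : δ 0 = (0, 0) := hδ.1
  have e1 : concatW m β δ m = β m := if_pos le_rfl
  have e2 : concatW m β δ (min k n + m) = δ (min k n) + β m := by
    rcases Nat.eq_zero_or_pos (min k n) with h | h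
    · rw [h, h0]; simp [concatW]
    · rw [concatW, if_neg (by omega)]; congr 2; omega
  rw [shiftW, e1, e2, add_sub_cancel_right]
  rcases le_or_gt k n with hk | hk
  · rw [min_eq_left hk]
  · rw [min_eq_right (le_of_lt hk), hδ.2.2.2 k (le_of_lt hk)]

lemma cSAB_supermul (m n : ℕ) : cSAB m * cSAB n ≤ cSAB (m + n) := by
  rw [cSAB, cSAB, cSAB, ← Nat.card_prod]
  apply Nat.card_le_card_of_injective
    (f := fun p : {γ // IsBridge m γ} × {γ // IsBridge n γ} =>
      (⟨concatW m p.1.1 p.2.1, p.1.2.concat p.2.2⟩ : {γ // IsBridge (m + n) γ}))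
  intro p q h
  have h' : concatW m p.1.1 p.2.1 = concatW m q.1.1 q.2.1 := congrArg Subtype.val h
  have h1 : p.1.1 = q.1.1 := by
    funext k
    rw [← trunc_concat (δ := p.2.1) p.1.2.1 k, ← trunc_concat (δ := q.2.1) q.1.2.1 k, h']
  have h2 : p.2.1 = q.2.1 := by
    funext k
    rw [← shift_concat (m := m) (β := p.1.1) p.2.2.1 k,
      ← shift_concat (m := m) (β := q.1.1) q.2.2.1 k, h']
  exact Prod.ext (Subtype.ext h1) (Subtype.ext h2)

lemma _root_.IsSAW.truncSAW {n m : ℕ} {γ : ℕ → ℤ × ℤ} (h : IsSAW n γ) (hm : m ≤ n) :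
    IsSAW m (HW.trunc m γ) := by
  obtain ⟨h0, hstep, hinj, hpad⟩ := h
  refine ⟨by simpa [HW.trunc] using h0, fun i hi => ?_, fun i hi j hj hij => ?_, fun i hi => ?_⟩
  · have h1 : min i m = i := min_eq_left (le_of_lt hi)
    have h2 : min (i + 1) m = i + 1 := min_eq_left hi
    simpa [HW.trunc, h1, h2] using hstep i (lt_of_lt_of_le hi hm)
  · exact hinj i (le_trans hi hm) j (le_trans hj hm)
      (by simpa [HW.trunc, min_eq_left hi, min_eq_left hj] using hij)
  · simp [HW.trunc, min_eq_right hi]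

lemma _root_.IsSAW.shiftSAW {m n : ℕ} {γ : ℕ → ℤ × ℤ} (h : IsSAW (m + n) γ) :
    IsSAW n (shiftW m n γ) := by
  obtain ⟨h0, hstep, hinj, hpad⟩ := h
  refine ⟨by simp [HW.shiftW, Prod.ext_iff], fun i hi => ?_, fun i hi j hj hij => ?_,
    fun i hi => ?_⟩
  · have h1 : min i n = i := min_eq_left (le_of_lt hi)
    have h2 : min (i + 1) n = i + 1 := min_eq_left hi
    have := hstep (i + m) (by omega)
    simp only [HW.shiftW, h1, h2, Prod.fst_sub, Prod.snd_sub]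
    have e1 : i + 1 + m = i + m + 1 := by omega
    rw [e1]
    convert this using 3 <;> ring
  · have : γ (min i n + m) = γ (min j n + m) := by
      have := sub_left_injective (G := ℤ × ℤ) hij
      simpa using this
    have := hinj (min i n + m) (by omega) (min j n + m) (by omega) this
    have h1 : min i n = i := min_eq_left hi
    have h2 : min j n = j := min_eq_left hj
    omega
  · simp [HW.shiftW, min_eq_right hi]

lemma cSAW_submul (m n : ℕ) : cSAW (m + n) ≤ cSAW m * cSAW n := by
  rw [cSAW, cSAW, cSAW, ← Nat.card_prod]
  apply Nat.card_le_card_of_injective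
    (f := fun γ : {γ // IsSAW (m + n) γ} =>
      ((⟨trunc m γ.1, γ.2.truncSAW (by omega)⟩ : {γ // IsSAW m γ}),
       (⟨shiftW m n γ.1, γ.2.shiftSAW⟩ : {γ // IsSAW n γ})))
  intro γ γ' h
  simp only [Prod.mk.injEq, Subtype.mk.injEq] at h
  obtain ⟨h1, h2⟩ := h
  apply Subtype.ext
  funext k
  have hm : ∀ j ≤ m, γ.1 j = γ'.1 j := by
    intro j hj
    have := congrFun h1 j
    simpa [trunc, min_eq_left hj] using this
  rcases le_or_gt k m with hk | hk
  · exact hm k hk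
  · rcases le_or_gt k (m + n) with hk2 | hk2
    · have := congrFun h2 (k - m)
      simp only [shiftW, min_eq_left (by omega : k - m ≤ n)] at this
      have e : k - m + m = k := by omega
      rw [e] at this
      have hmm := hm m le_rfl
      have : γ.1 k - γ.1 m = γ'.1 k - γ'.1 m := this
      rw [hmm] at this
      exact sub_left_injective this
    · rw [γ.2.2.2.2 k (by omega), γ'.2.2.2.2 k (by omega)]
      have := congrFun h2 n
      simp only [shiftW, min_self] at this
      have hmm := hm m le_rfl
      rw [hmm] at this
      have e : n + m = m + n := by omega
      rw [e] at this
      exact sub_left_injective this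

def upWalk (n : ℕ) : ℕ → ℤ × ℤ := fun k => (0, ((min k n : ℕ) : ℤ))

lemma upWalk_bridge (n : ℕ) : IsBridge n (upWalk n) := by
  constructor
  · refine ⟨by simp [upWalk], fun i hi => ?_, fun i hi j hj hij => ?_, fun i hi => ?_⟩
    · simp only [upWalk]
      rw [min_eq_left (by omega : i + 1 ≤ n), min_eq_left (by omega : i ≤ n)]
      push_cast
      simp
    · simp only [upWalk, Prod.mk.injEq] at hij
      have : min i n = min j n := by exact_mod_cast hij.2
      omega
    · simp only [upWalk]
      rw [min_eq_right hi, min_self]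
  · intro k hk0 hkn
    simp only [upWalk]
    rw [min_eq_left hkn, min_self]
    constructor
    · exact_mod_cast hk0
    · exact_mod_cast hkn

lemma one_le_cSAB (n : ℕ) : 1 ≤ cSAB n := by
  have : Nonempty {γ // IsBridge n γ} := ⟨⟨upWalk n, upWalk_bridge n⟩⟩
  exact Nat.one_le_iff_ne_zero.2 (Nat.card_ne_zero.2 ⟨this, bridgeFinite n⟩)

lemma cSAB_le_cSAW (n : ℕ) : cSAB n ≤ cSAW n :=
  Nat.card_le_card_of_injective
    (fun γ : {γ // IsBridge n γ} => (⟨γ.1, γ.2.1⟩ : {γ // IsSAW n γ}))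
    (by intro a b h; simp only [Subtype.mk.injEq] at h; exact Subtype.ext h)

lemma one_le_cSAW (n : ℕ) : 1 ≤ cSAW n := le_trans (one_le_cSAB n) (cSAB_le_cSAW n)

noncomputable def useq (n : ℕ) : ℝ := Real.log (cSAW n)

lemma useq_nonneg (n : ℕ) : 0 ≤ useq n :=
  Real.log_nonneg (by exact_mod_cast one_le_cSAW n)

lemma useq_subadd : Subadditive useq := by
  intro m n
  have h1 : (0:ℝ) < (cSAW m : ℝ) := by exact_mod_cast one_le_cSAW m
  have h2 : (0:ℝ) < (cSAW n : ℝ) := by exact_mod_cast one_le_cSAW n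
  have h3 : (0:ℝ) < (cSAW (m + n) : ℝ) := by exact_mod_cast one_le_cSAW (m + n)
  rw [useq, useq, useq, ← Real.log_mul (ne_of_gt h1) (ne_of_gt h2)]
  apply Real.log_le_log h3
  exact_mod_cast cSAW_submul m n

lemma useq_bdd : BddBelow (Set.range fun n : ℕ => useq n / n) := by
  refine ⟨0, fun x hx => ?_⟩
  obtain ⟨n, rfl⟩ := hx
  exact div_nonneg (useq_nonneg n) (by positivity)

noncomputable def Lsaw : ℝ := useq_subadd.lim

lemma cSAB_pow_le (n k : ℕ) (hk : 1 ≤ k) : cSAB n ^ k ≤ cSAW (n * k) := by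
  have key : ∀ k, 1 ≤ k → cSAB n ^ k ≤ cSAB (n * k) := by
    intro k hk
    induction k with
    | zero => omega
    | succ k ih =>
      rcases Nat.eq_zero_or_pos k with rfl | hk0
      · simpa using le_rfl
      · calc cSAB n ^ (k + 1) = cSAB n ^ k * cSAB n := by ring
          _ ≤ cSAB (n * k) * cSAB n := Nat.mul_le_mul_right _ (ih hk0)
          _ ≤ cSAB (n * k + n) := cSAB_supermul (n * k) n
          _ = cSAB (n * (k + 1)) := by ring_nf
  exact le_trans (key k hk) (cSAB_le_cSAW (n * k))

lemma log_cSAB_le (n : ℕ) (hn : 1 ≤ n) : Real.log (cSAB n) ≤ n * Lsaw := by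
  have hmono : Filter.Tendsto (fun k : ℕ => n * k) Filter.atTop Filter.atTop := by
    apply Filter.tendsto_atTop_mono (f := id) (fun k => Nat.le_mul_of_pos_left k hn)
    exact Filter.tendsto_id
  have htend0 : Filter.Tendsto (fun k : ℕ => useq (n * k) / ((n : ℝ) * (k : ℝ)))
      Filter.atTop (nhds Lsaw) := by
    have := (useq_subadd.tendsto_lim useq_bdd).comp hmono
    simpa [Function.comp_def, Lsaw] using this
  have htend : Filter.Tendsto (fun k : ℕ => (n : ℝ) * (useq (n * k) / ((n : ℝ) * (k : ℝ))))
      Filter.atTop (nhds ((n : ℝ) * Lsaw)) := Filter.Tendsto.const_mul _ htend0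
  apply ge_of_tendsto htend
  filter_upwards [Filter.eventually_ge_atTop 1] with k hk
  have hpow := cSAB_pow_le n k hk
  have h1 : (1:ℝ) ≤ (cSAB n : ℝ) := by exact_mod_cast one_le_cSAB n
  have h2 : Real.log (cSAB n ^ k) ≤ Real.log (cSAW (n * k)) := by
    apply Real.log_le_log (by positivity)
    exact_mod_cast hpow
  rw [Real.log_pow] at h2
  have hnk : (0:ℝ) < (n : ℝ) * (k : ℝ) := by
    have : (0:ℝ) < (n:ℝ) := by exact_mod_cast hn
    have : (0:ℝ) < (k:ℝ) := by exact_mod_cast hk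
    positivity
  rw [← sub_nonneg]
  have e : (n : ℝ) * (useq (n * k) / ((n : ℝ) * (k : ℝ))) - Real.log (cSAB n)
      = (1 / k) * (useq (n * k) - k * Real.log (cSAB n)) := by
    push_cast
    field_simp
  rw [e]
  apply mul_nonneg (by positivity)
  rw [sub_nonneg]
  exact_mod_cast h2

lemma expL_le_mu : Real.exp Lsaw ≤ mu := by
  apply le_ciInf
  intro n
  have hpos : (0:ℝ) < (cSAW (n + 1) : ℝ) := by exact_mod_cast one_le_cSAW (n + 1)
  have hL : Lsaw ≤ useq (n + 1) / (n + 1) := by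
    have := useq_subadd.lim_le_div useq_bdd (n := n + 1) (by omega)
    simpa [Lsaw] using this
  have : ((cSAW (n + 1) : ℝ)) ^ ((1 : ℝ) / (n + 1))
      = Real.exp (useq (n + 1) / ((n : ℝ) + 1)) := by
    rw [Real.rpow_def_of_pos hpos, useq]
    congr 1
    push_cast
    ring
  rw [this]
  apply Real.exp_le_exp.2
  exact le_trans hL (by push_cast; exact le_rfl)

lemma mu_pos : 0 < mu := lt_of_lt_of_le (Real.exp_pos _) expL_le_mu

lemma cSAB_le_mu_pow (n : ℕ) (hn : 1 ≤ n) : (cSAB n : ℝ) ≤ mu ^ n := by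
  have h1 : (0:ℝ) < (cSAB n : ℝ) := by exact_mod_cast one_le_cSAB n
  calc (cSAB n : ℝ) = Real.exp (Real.log (cSAB n)) := (Real.exp_log h1).symm
    _ ≤ Real.exp ((n : ℝ) * Lsaw) := Real.exp_le_exp.2 (log_cSAB_le n hn)
    _ = (Real.exp Lsaw) ^ n := by rw [← Real.exp_nat_mul]
    _ ≤ mu ^ n := pow_le_pow_left₀ (Real.exp_pos _).le expL_le_mu n

def flipW (γ : ℕ → ℤ × ℤ) : ℕ → ℤ × ℤ := fun k => ((γ k).1, -(γ k).2)

lemma _root_.IsSAW.flipW {n : ℕ} {γ : ℕ → ℤ × ℤ} (h : IsSAW n γ) : IsSAW n (flipW γ) := by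
  obtain ⟨h0, hstep, hinj, hpad⟩ := h
  refine ⟨by simp [HW.flipW, h0], fun i hi => ?_, fun i hi j hj hij => ?_, fun i hi => ?_⟩
  · have := hstep i hi
    simp only [HW.flipW]
    rw [show -(γ (i+1)).2 - -(γ i).2 = -((γ (i+1)).2 - (γ i).2) by ring, abs_neg]
    exact this
  · apply hinj i hi j hj
    simp only [HW.flipW, Prod.ext_iff] at hij ⊢
    exact ⟨hij.1, by linarith [hij.2]⟩
  · simp [HW.flipW, hpad i hi]

/-! ### The Hammersley–Welsh decomposition -/

noncomputable def maxH (n : ℕ) (γ : ℕ → ℤ × ℤ) : ℤ :=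
  (Finset.range (n + 1)).sup' (Finset.nonempty_range_iff.mpr (Nat.succ_ne_zero n))
    (fun k => (γ k).2)

lemma le_maxH {n k : ℕ} (γ : ℕ → ℤ × ℤ) (hk : k ≤ n) : (γ k).2 ≤ maxH n γ :=
  Finset.le_sup' (fun k => (γ k).2) (Finset.mem_range.mpr (Nat.lt_succ_of_le hk))

lemma maxH_exists (n : ℕ) (γ : ℕ → ℤ × ℤ) : ∃ k ≤ n, (γ k).2 = maxH n γ := by
  obtain ⟨k, hk, he⟩ := Finset.exists_mem_eq_sup' (s := Finset.range (n + 1))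
    (Finset.nonempty_range_iff.mpr (Nat.succ_ne_zero n)) (fun k => (γ k).2)
  exact ⟨k, Nat.lt_succ_iff.mp (Finset.mem_range.mp hk), he.symm⟩

lemma maxH_le_of_le {n : ℕ} {γ : ℕ → ℤ × ℤ} {c : ℤ} (h : ∀ k ≤ n, (γ k).2 ≤ c) :
    maxH n γ ≤ c :=
  Finset.sup'_le _ _ (fun k hk => h k (Nat.lt_succ_iff.mp (Finset.mem_range.mp hk)))

lemma y_le_idx {n : ℕ} {γ : ℕ → ℤ × ℤ} (h : IsSAW n γ) : ∀ k ≤ n, (γ k).2 ≤ (k : ℤ) := by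
  intro k hk
  induction k with
  | zero => simp [h.1]
  | succ k ih =>
    have hs := h.2.1 k (by omega)
    have h1 : (γ (k + 1)).2 - (γ k).2 ≤ 1 := by
      have := le_abs_self ((γ (k + 1)).2 - (γ k).2)
      have := abs_nonneg ((γ (k + 1)).1 - (γ k).1)
      linarith
    have := ih (by omega)
    push_cast
    linarith

lemma maxH_le_n {n : ℕ} {γ : ℕ → ℤ × ℤ} (h : IsSAW n γ) : maxH n γ ≤ (n : ℤ) :=
  maxH_le_of_le (fun k hk => le_trans (y_le_idx h k hk) (by exact_mod_cast hk))

lemma maxH_pos {n : ℕ} {γ : ℕ → ℤ × ℤ} (hγ : IsHSW n γ) (hn : 1 ≤ n) : 1 ≤ maxH n γ :=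
  le_trans (by have := hγ.2 1 one_pos hn; omega) (le_maxH γ hn)

noncomputable def tdec (n : ℕ) (γ : ℕ → ℤ × ℤ) : ℕ :=
  Nat.findGreatest (fun k => (γ k).2 = maxH n γ) n

lemma tdec_spec {n : ℕ} {γ : ℕ → ℤ × ℤ} (hγ : IsHSW n γ) (hn : 1 ≤ n) :
    1 ≤ tdec n γ ∧ tdec n γ ≤ n ∧ (γ (tdec n γ)).2 = maxH n γ ∧
      ∀ j, tdec n γ < j → j ≤ n → (γ j).2 < maxH n γ := by
  obtain ⟨k, hk, hke⟩ := maxH_exists n γ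
  have hk0 : k ≠ 0 := by
    intro h
    rw [h, hγ.1.1] at hke
    have := maxH_pos hγ hn
    simp at hke
    omega
  have h1 : k ≤ tdec n γ := Nat.le_findGreatest hk hke
  have h2 : tdec n γ ≤ n := Nat.findGreatest_le n
  have h3 : (γ (tdec n γ)).2 = maxH n γ :=
    Nat.findGreatest_spec (P := fun k => (γ k).2 = maxH n γ) hk hke
  refine ⟨by omega, h2, h3, fun j hj hjn => ?_⟩
  have := Nat.findGreatest_is_greatest (P := fun k => (γ k).2 = maxH n γ) hj hjn
  have hle := le_maxH γ hjn
  exact lt_of_le_of_ne hle this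

noncomputable def remwalk (t n : ℕ) (γ : ℕ → ℤ × ℤ) : ℕ → ℤ × ℤ :=
  flipW (shiftW t (n - t) γ)

lemma remwalk_apply (t n : ℕ) (γ : ℕ → ℤ × ℤ) (k : ℕ) :
    remwalk t n γ k = ((γ (min k (n - t) + t)).1 - (γ t).1,
      (γ t).2 - (γ (min k (n - t) + t)).2) := by
  simp only [remwalk, flipW, shiftW, Prod.fst_sub, Prod.snd_sub]
  congr 1
  ring

lemma remwalk_saw {t n : ℕ} {γ : ℕ → ℤ × ℤ} (hγ : IsSAW n γ) (ht : t ≤ n) :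
    IsSAW (n - t) (remwalk t n γ) := by
  have e : t + (n - t) = n := by omega
  have : IsSAW (t + (n - t)) γ := by rw [e]; exact hγ
  exact this.shiftSAW.flipW

lemma remwalk_hsw {n : ℕ} {γ : ℕ → ℤ × ℤ} (hγ : IsHSW n γ) (hn : 1 ≤ n) :
    IsHSW (n - tdec n γ) (remwalk (tdec n γ) n γ) := by
  obtain ⟨ht1, htn, hty, hafter⟩ := tdec_spec hγ hn
  refine ⟨remwalk_saw hγ.1 htn, fun k hk0 hkn => ?_⟩
  rw [remwalk_apply, min_eq_left hkn]
  simp only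
  have := hafter (k + tdec n γ) (by omega) (by omega)
  rw [hty]
  omega

lemma remwalk_maxH {n : ℕ} {γ : ℕ → ℤ × ℤ} (hγ : IsHSW n γ) (hn : 1 ≤ n) :
    maxH (n - tdec n γ) (remwalk (tdec n γ) n γ) ≤ maxH n γ - 1 := by
  obtain ⟨ht1, htn, hty, hafter⟩ := tdec_spec hγ hn
  apply maxH_le_of_le
  intro k hk
  rw [remwalk_apply, min_eq_left hk]
  simp only
  have := hγ.2 (k + tdec n γ) (by omega) (by omega)
  rw [hty]
  omega

noncomputable def unfoldHW : ℕ → (ℕ → ℤ × ℤ) → Finset ℕ × (ℕ → ℤ × ℤ)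
  | n, γ =>
    if h : n = 0 ∨ tdec n γ = 0 then (∅, γ)
    else
      have hlt : n - tdec n γ < n := by
        push_neg at h
        have := Nat.findGreatest_le (P := fun k => (γ k).2 = maxH n γ) n
        have : tdec n γ ≤ n := this
        omega
      ((insert (maxH n γ).toNat (unfoldHW (n - tdec n γ) (remwalk (tdec n γ) n γ)).1,
        concatW (tdec n γ) γ (unfoldHW (n - tdec n γ) (remwalk (tdec n γ) n γ)).2))
  termination_by n _ => n

lemma unfoldHW_zero (γ : ℕ → ℤ × ℤ) : unfoldHW 0 γ = (∅, γ) := by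
  rw [unfoldHW]
  simp

lemma unfoldHW_pos {n : ℕ} {γ : ℕ → ℤ × ℤ} (hn : n ≠ 0) (ht : tdec n γ ≠ 0) :
    unfoldHW n γ =
      ((insert (maxH n γ).toNat (unfoldHW (n - tdec n γ) (remwalk (tdec n γ) n γ)).1,
        concatW (tdec n γ) γ (unfoldHW (n - tdec n γ) (remwalk (tdec n γ) n γ)).2)) := by
  rw [unfoldHW]
  simp [hn, ht]

lemma concatW_congr {m : ℕ} {β β' δ : ℕ → ℤ × ℤ} (h : ∀ k ≤ m, β k = β' k) :
    concatW m β δ = concatW m β' δ := by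
  funext k
  rcases le_or_gt k m with hk | hk
  · simp [concatW, hk, h k hk]
  · simp [concatW, Nat.not_le.2 hk, h m le_rfl]

lemma trunc_bridge {n : ℕ} {γ : ℕ → ℤ × ℤ} (hγ : IsHSW n γ) (hn : 1 ≤ n) :
    IsBridge (tdec n γ) (trunc (tdec n γ) γ) := by
  obtain ⟨ht1, htn, hty, hafter⟩ := tdec_spec hγ hn
  refine ⟨hγ.1.truncSAW htn, fun k hk0 hkt => ?_⟩
  simp only [trunc, min_eq_left hkt, min_self]
  constructor
  · exact hγ.2 k hk0 (by omega)
  · rw [hty]; exact le_maxH γ (by omega)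

lemma unfold_spec : ∀ n : ℕ, ∀ γ : ℕ → ℤ × ℤ, IsHSW n γ →
    IsBridge n (unfoldHW n γ).2 ∧
    (unfoldHW n γ).1.sum id ≤ n ∧
    (∀ s ∈ (unfoldHW n γ).1, 1 ≤ s ∧ (s : ℤ) ≤ maxH n γ) ∧
    (1 ≤ n → (maxH n γ).toNat ∈ (unfoldHW n γ).1) := by
  intro n
  induction n using Nat.strong_induction_on with
  | _ n ih =>
    intro γ hγ
    rcases Nat.eq_zero_or_pos n with rfl | hn
    · rw [unfoldHW_zero]
      refine ⟨⟨hγ.1, fun k hk0 hk => by omega⟩, by simp, by simp, by omega⟩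
    · obtain ⟨ht1, htn, hty, hafter⟩ := tdec_spec hγ hn
      have hδ : IsHSW (n - tdec n γ) (remwalk (tdec n γ) n γ) := remwalk_hsw hγ hn
      obtain ⟨ihB, ihsum, ihel, ihmem⟩ := ih (n - tdec n γ) (by omega) _ hδ
      have hmaxδ := remwalk_maxH hγ hn
      have hmax1 := maxH_pos hγ hn
      rw [unfoldHW_pos (by omega) (by omega)]
      have hnotmem : (maxH n γ).toNat ∉ (unfoldHW (n - tdec n γ) (remwalk (tdec n γ) n γ)).1 := by
        intro hmem
        have := (ihel _ hmem).2
        rw [Int.toNat_of_nonneg (by omega)] at this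
        omega
      refine ⟨?_, ?_, ?_, ?_⟩
      · have hb1 : IsBridge (tdec n γ) (trunc (tdec n γ) γ) := trunc_bridge hγ hn
        have := hb1.concat ihB
        have e : tdec n γ + (n - tdec n γ) = n := by omega
        rw [e] at this
        rwa [concatW_congr (β' := γ) (fun k hk => by simp [trunc, min_eq_left hk])] at this
      · rw [Finset.sum_insert hnotmem]
        have hmh : (maxH n γ).toNat ≤ tdec n γ := by
          have h1 : maxH n γ ≤ (tdec n γ : ℤ) := by
            rw [← hty]; exact y_le_idx hγ.1 _ htn
          omega
        simp only [id] at ihsum ⊢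
        omega
      · intro s hs
        rcases Finset.mem_insert.mp hs with rfl | hs
        · constructor
          · omega
          · rw [Int.toNat_of_nonneg (by omega)]
        · obtain ⟨ha, hb⟩ := ihel s hs
          exact ⟨ha, by omega⟩
      · intro _
        exact Finset.mem_insert_self _ _

lemma unfold_inj : ∀ n : ℕ, ∀ γ γ' : ℕ → ℤ × ℤ, IsHSW n γ → IsHSW n γ' →
    unfoldHW n γ = unfoldHW n γ' → γ = γ' := by
  intro n
  induction n using Nat.strong_induction_on with
  | _ n ih =>
    intro γ γ' hγ hγ' heq
    rcases Nat.eq_zero_or_pos n with rfl | hn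
    · rw [unfoldHW_zero, unfoldHW_zero] at heq
      exact congrArg Prod.snd heq
    · obtain ⟨ht1, htn, hty, hafter⟩ := tdec_spec hγ hn
      obtain ⟨ht1', htn', hty', hafter'⟩ := tdec_spec hγ' hn
      have hδ : IsHSW (n - tdec n γ) (remwalk (tdec n γ) n γ) := remwalk_hsw hγ hn
      have hδ' : IsHSW (n - tdec n γ') (remwalk (tdec n γ') n γ') := remwalk_hsw hγ' hn
      obtain ⟨ihB, ihsum, ihel, ihmem⟩ := unfold_spec _ _ hδ
      obtain ⟨ihB', ihsum', ihel', ihmem'⟩ := unfold_spec _ _ hδ'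
      have hmaxδ := remwalk_maxH hγ hn
      have hmaxδ' := remwalk_maxH hγ' hn
      have hmax1 := maxH_pos hγ hn
      have hmax1' := maxH_pos hγ' hn
      rw [unfoldHW_pos (by omega : n ≠ 0) (by omega : tdec n γ ≠ 0),
        unfoldHW_pos (by omega : n ≠ 0) (by omega : tdec n γ' ≠ 0)] at heq
      set t := tdec n γ with hts
      set t' := tdec n γ' with hts'
      set δ := remwalk t n γ with hδs
      set δ' := remwalk t' n γ' with hδs'
      set B1 := (unfoldHW (n - t) δ).2 with hB1s
      set B2 := (unfoldHW (n - t') δ').2 with hB2s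
      have hS : insert (maxH n γ).toNat (unfoldHW (n - t) δ).1
          = insert (maxH n γ').toNat (unfoldHW (n - t') δ').1 := congrArg Prod.fst heq
      have hB : concatW t γ B1 = concatW t' γ' B2 := congrArg Prod.snd heq
      have h01 : B1 0 = (0, 0) := ihB.1.1
      have h02 : B2 0 = (0, 0) := ihB'.1.1
      -- Step 1: the maximal heights agree
      have hh : maxH n γ = maxH n γ' := by
        have m1 : (maxH n γ).toNat ∈ insert (maxH n γ').toNat (unfoldHW (n - t') δ').1 := by
          rw [← hS]; exact Finset.mem_insert_self _ _
        have m2 : (maxH n γ').toNat ∈ insert (maxH n γ).toNat (unfoldHW (n - t) δ).1 := by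
          rw [hS]; exact Finset.mem_insert_self _ _
        rcases Finset.mem_insert.mp m1 with e1 | e1
        · omega
        · have he1 := (ihel' _ e1).2
          rw [Int.toNat_of_nonneg (by omega)] at he1
          rcases Finset.mem_insert.mp m2 with e2 | e2
          · omega
          · have he2 := (ihel _ e2).2
            rw [Int.toNat_of_nonneg (by omega)] at he2
            omega
      -- Step 2: the splitting times agree
      have key1 : ∀ k ≤ n, ((concatW t γ B1) k).2 ≤ maxH n γ ↔ k ≤ t := by
        intro k hk
        constructor
        · intro hle
          by_contra hkt
          push_neg at hkt
          rw [concatW_of_ge h01 (by omega)] at hle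
          have := (ihB.2 (k - t) (by omega) (by omega)).1
          simp only [Prod.snd_add] at hle
          omega
        · intro hkt
          rw [concatW_of_le hkt]
          exact le_maxH γ hk
      have key2 : ∀ k ≤ n, ((concatW t' γ' B2) k).2 ≤ maxH n γ' ↔ k ≤ t' := by
        intro k hk
        constructor
        · intro hle
          by_contra hkt
          push_neg at hkt
          rw [concatW_of_ge h02 (by omega)] at hle
          have := (ihB'.2 (k - t') (by omega) (by omega)).1
          simp only [Prod.snd_add] at hle
          omega
        · intro hkt
          rw [concatW_of_le hkt]
          exact le_maxH γ' hk
      have htt : t = t' := by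
        have hle1 : t ≤ t' := by
          apply (key2 t htn).mp
          rw [← hB, concatW_of_le le_rfl, hty, hh]
        have hle2 : t' ≤ t := by
          apply (key1 t' htn').mp
          rw [hB, concatW_of_le le_rfl, hty', hh]
        omega
      -- Step 3: agreement up to time t
      have hup : ∀ k ≤ t, γ k = γ' k := by
        intro k hk
        have := congrFun hB k
        rwa [concatW_of_le hk, concatW_of_le (htt ▸ hk)] at this
      -- Step 4: the sub-bridges agree
      have hBval : ∀ k ≤ n - t, B1 k = B2 k := by
        intro k hk
        rcases Nat.eq_zero_or_pos k with rfl | hk0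
        · rw [h01, h02]
        · have e1 := congrFun hB (k + t)
          rw [concatW_of_ge h01 (by omega), ← htt, concatW_of_ge h02 (by omega)] at e1
          have e2 : k + t - t = k := by omega
          rw [e2] at e1
          have e3 : γ t = γ' t := hup t le_rfl
          rw [← e3] at e1
          exact add_right_cancel e1
      have hBeq : B1 = B2 := by
        funext k
        rcases le_or_gt k (n - t) with hk | hk
        · exact hBval k hk
        · have p1 := ihB.1.2.2.2 k (by omega)
          have p2 := ihB'.1.2.2.2 k (by omega)
          rw [p1, p2, ← htt]
          exact hBval (n - t) le_rfl
      -- Step 5: the finsets agree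
      have hnm2 : (maxH n γ').toNat ∉ (unfoldHW (n - t') δ').1 := by
        intro hmem
        have := (ihel' _ hmem).2
        rw [Int.toNat_of_nonneg (by omega)] at this
        omega
      have hnm1 : (maxH n γ').toNat ∉ (unfoldHW (n - t) δ).1 := by
        intro hmem
        have := (ihel _ hmem).2
        rw [Int.toNat_of_nonneg (by omega)] at this
        omega
      rw [hh] at hS
      have hSS : (unfoldHW (n - t) δ).1 = (unfoldHW (n - t') δ').1 := by
        have := congrArg (fun s => Finset.erase s (maxH n γ').toNat) hS
        simpa [Finset.erase_insert hnm1, Finset.erase_insert hnm2] using this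
      -- Step 6: apply the induction hypothesis
      have hun : unfoldHW (n - t) δ = unfoldHW (n - t') δ' := Prod.ext hSS hBeq
      have hδ'2 : IsHSW (n - t) δ' := by rw [htt]; exact hδ'
      have hδeq : δ = δ' := by
        apply ih (n - t) (by omega) δ δ' hδ hδ'2
        rw [hun, htt]
      -- Step 7: reconstruct the walk
      have hall : ∀ k ≤ n, γ k = γ' k := by
        intro k hk
        rcases le_or_gt k t with hkt | hkt
        · exact hup k hkt
        · have e1 := congrFun hδeq (k - t)
          rw [hδs, hδs', remwalk_apply, remwalk_apply, ← htt] at e1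
          have emin : min (k - t) (n - t) = k - t := by omega
          rw [emin] at e1
          have e2 : k - t + t = k := by omega
          rw [e2] at e1
          have e3 : γ t = γ' t := hup t le_rfl
          simp only [Prod.mk.injEq] at e1
          have ex : (γ k).1 = (γ' k).1 := by
            have h4 := e1.1
            rw [e3] at h4
            linarith
          have ey : (γ k).2 = (γ' k).2 := by
            have h4 := e1.2
            rw [e3] at h4
            linarith
          exact Prod.ext ex ey
      funext k
      rcases le_or_gt k n with hk | hk
      · exact hall k hk
      · rw [hγ.1.2.2.2 k (by omega), hγ'.1.2.2.2 k (by omega)]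
        exact hall n le_rfl

/-! ### Counting -/

def Tn (n : ℕ) : Finset (Finset ℕ) :=
  (Finset.Icc 1 n).powerset.filter (fun S => S.sum id ≤ n)

lemma cHSW_le_card_mul (n : ℕ) : cHSW n ≤ (Tn n).card * cSAB n := by
  have e1 : (Tn n).card = Nat.card ↥(Tn n) := by
    rw [Nat.card_eq_fintype_card, Fintype.card_coe]
  rw [cHSW, cSAB, e1, ← Nat.card_prod]
  have hmem : ∀ γ : {γ : ℕ → ℤ × ℤ // IsHSW n γ}, (unfoldHW n γ.1).1 ∈ Tn n := by
    intro γ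
    obtain ⟨hB, hsum, hel, hm⟩ := unfold_spec n γ.1 γ.2
    rw [Tn, Finset.mem_filter, Finset.mem_powerset]
    refine ⟨fun s hs => ?_, hsum⟩
    obtain ⟨h1, h2⟩ := hel s hs
    have h3 : maxH n γ.1 ≤ (n : ℤ) := maxH_le_n γ.2.1
    rw [Finset.mem_Icc]
    omega
  apply Nat.card_le_card_of_injective
    (f := fun γ : {γ : ℕ → ℤ × ℤ // IsHSW n γ} =>
      ((⟨(unfoldHW n γ.1).1, hmem γ⟩ : ↥(Tn n)),
       (⟨(unfoldHW n γ.1).2, (unfold_spec n γ.1 γ.2).1⟩ : {β // IsBridge n β})))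
  intro γ γ' h
  simp only [Prod.mk.injEq, Subtype.mk.injEq] at h
  exact Subtype.ext (unfold_inj n γ.1 γ'.1 γ.2 γ'.2 (Prod.ext h.1 h.2))

lemma Tn_card_le (n : ℕ) (hn : 1 ≤ n) :
    ((Tn n).card : ℝ) ≤ Real.exp (2 * Real.sqrt n) := by
  have hsq : 0 < Real.sqrt n := Real.sqrt_pos.mpr (by exact_mod_cast hn)
  set t : ℝ := (Real.sqrt n)⁻¹ with hts
  have ht : 0 < t := by positivity
  set r : ℝ := Real.exp (-t) with hrs
  have hr0 : 0 < r := Real.exp_pos _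
  have hr1 : r < 1 := Real.exp_lt_one_iff.mpr (by linarith)
  have stepA : ((Tn n).card : ℝ) ≤
      ∑ S ∈ (Finset.Icc 1 n).powerset, Real.exp (t * n) * ∏ k ∈ S, r ^ k := by
    rw [Finset.card_eq_sum_ones, Nat.cast_sum]
    have h1 : ∀ S ∈ Tn n, ((1 : ℕ) : ℝ) ≤ Real.exp (t * n) * ∏ k ∈ S, r ^ k := by
      intro S hS
      rw [Tn, Finset.mem_filter] at hS
      have hm : ((S.sum id : ℕ) : ℝ) ≤ (n : ℝ) := by exact_mod_cast hS.2
      have e2 : ∏ k ∈ S, r ^ k = r ^ (S.sum id) := by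
        rw [← Finset.prod_pow_eq_pow_sum]
        rfl
      rw [e2, hrs, ← Real.exp_nat_mul, ← Real.exp_add]
      push_cast
      have : (0:ℝ) ≤ t * n + ((S.sum id : ℕ) : ℝ) * (-t) := by nlinarith
      simpa using Real.one_le_exp this
    calc (∑ _S ∈ Tn n, ((1:ℕ):ℝ)) ≤ ∑ S ∈ Tn n, Real.exp (t * n) * ∏ k ∈ S, r ^ k :=
          Finset.sum_le_sum h1
      _ ≤ ∑ S ∈ (Finset.Icc 1 n).powerset, Real.exp (t * n) * ∏ k ∈ S, r ^ k := by
          apply Finset.sum_le_sum_of_subset_of_nonneg (Finset.filter_subset _ _)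
          intro S _ _
          positivity
  have stepC : ∑ S ∈ (Finset.Icc 1 n).powerset, ∏ k ∈ S, r ^ k
      = ∏ k ∈ Finset.Icc 1 n, (r ^ k + 1) := by
    rw [Finset.prod_add]
    apply Finset.sum_congr rfl
    intro S _
    simp
  have stepD : ∏ k ∈ Finset.Icc 1 n, (r ^ k + 1)
      ≤ Real.exp (∑ k ∈ Finset.Icc 1 n, r ^ k) := by
    rw [Real.exp_sum]
    apply Finset.prod_le_prod
    · intro k _; positivity
    · intro k _
      have := Real.add_one_le_exp (r ^ k)
      linarith
  have stepE : ∑ k ∈ Finset.Icc 1 n, r ^ k ≤ 1 / t := by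
    have hrne : r ≠ 1 := ne_of_lt hr1
    have e3 : Finset.Icc 1 n = Finset.Ico 1 (n + 1) := by
      rw [Finset.Ico_add_one_right_eq_Icc]
    rw [e3, geom_sum_Ico hrne (by omega)]
    have e4 : (r ^ (n + 1) - r ^ 1) / (r - 1) = (r - r ^ (n + 1)) / (1 - r) := by
      rw [← neg_div_neg_eq]
      ring_nf
    rw [e4]
    have h5 : r * t ≤ 1 - r := by
      have h6 : t + 1 ≤ Real.exp t := Real.add_one_le_exp t
      have h7 : (t + 1) * r ≤ 1 := by
        rw [hrs, Real.exp_neg]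
        rw [mul_inv_le_iff₀ (Real.exp_pos t)]
        linarith
      nlinarith
    have h8 : (r - r ^ (n + 1)) / (1 - r) ≤ r / (1 - r) := by
      have hp : (0:ℝ) ≤ r ^ (n + 1) := by positivity
      apply (div_le_div_iff_of_pos_right (by linarith)).mpr
      linarith
    have h9 : r / (1 - r) ≤ 1 / t := by
      rw [div_le_div_iff₀ (by linarith) ht]
      linarith
    calc (r - r ^ (n + 1)) / (1 - r) ≤ r / (1 - r) := h8
      _ ≤ 1 / t := h9
  calc ((Tn n).card : ℝ)
      ≤ ∑ S ∈ (Finset.Icc 1 n).powerset, Real.exp (t * n) * ∏ k ∈ S, r ^ k := stepA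
    _ = Real.exp (t * n) * ∑ S ∈ (Finset.Icc 1 n).powerset, ∏ k ∈ S, r ^ k := by
        rw [Finset.mul_sum]
    _ = Real.exp (t * n) * ∏ k ∈ Finset.Icc 1 n, (r ^ k + 1) := by rw [stepC]
    _ ≤ Real.exp (t * n) * Real.exp (∑ k ∈ Finset.Icc 1 n, r ^ k) := by
        apply mul_le_mul_of_nonneg_left stepD (Real.exp_nonneg _)
    _ ≤ Real.exp (t * n) * Real.exp (1 / t) := by
        apply mul_le_mul_of_nonneg_left (Real.exp_le_exp.2 stepE) (Real.exp_nonneg _)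
    _ = Real.exp (2 * Real.sqrt n) := by
        rw [← Real.exp_add]
        congr 1
        rw [hts]
        have e5 : (Real.sqrt n)⁻¹ * n = Real.sqrt n := by
          rw [inv_mul_eq_div, Real.div_sqrt]
        rw [e5, one_div, inv_inv]
        ring

end HW

/-- Hammersley–Welsh bound for half-space walks:
`|HSW_n| ≤ exp(C n^{1/2}) μ^n` for all `n ∈ ℕ`. -/
theorem hsw_hammersley_welsh :
    ∃ C : ℝ, 0 < C ∧ ∀ n : ℕ, 1 ≤ n →
      (cHSW n : ℝ) ≤ Real.exp (C * Real.sqrt n) * mu ^ n := by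
  refine ⟨2, by norm_num, fun n hn => ?_⟩
  have h1 : (cHSW n : ℝ) ≤ ((HW.Tn n).card : ℝ) * (cSAB n : ℝ) := by
    exact_mod_cast HW.cHSW_le_card_mul n
  have h2 := HW.Tn_card_le n hn
  have h3 := HW.cSAB_le_mu_pow n hn
  calc (cHSW n : ℝ) ≤ ((HW.Tn n).card : ℝ) * (cSAB n : ℝ) := h1
    _ ≤ Real.exp (2 * Real.sqrt n) * mu ^ n :=
        mul_le_mul h2 h3 (by positivity) (Real.exp_nonneg _)
end

section
/- There exists a constant C > 0 (with d ≥ 2, here d = 2) such that for all n ∈ ℕ, the number of self-avoiding walks of length n on ℤ² starting at the origin satisfies |SAW_n| ≤ exp(C·n^{1/2}) · μ^n, where μ is the connective constant. -/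
/-! ### Basic facts about SAWs -/

theorem IsSAW.start {n γ} (h : IsSAW n γ) : γ 0 = (0,0) := h.1
theorem IsSAW.step {n γ} (h : IsSAW n γ) : ∀ i < n,
    |(γ (i + 1)).1 - (γ i).1| + |(γ (i + 1)).2 - (γ i).2| = 1 := h.2.1
theorem IsSAW.inj {n γ} (h : IsSAW n γ) : ∀ i ≤ n, ∀ j ≤ n, γ i = γ j → i = j := h.2.2.1
theorem IsSAW.pad {n γ} (h : IsSAW n γ) : ∀ i, n ≤ i → γ i = γ n := h.2.2.2

/-- y changes by at most 1 per step. -/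
theorem IsSAW.ystep {n γ} (h : IsSAW n γ) {i : ℕ} (hi : i < n) :
    |(γ (i+1)).2 - (γ i).2| ≤ 1 := by
  have := h.step i hi
  have := abs_nonneg ((γ (i + 1)).1 - (γ i).1)
  omega

theorem IsSAW.y_le_self {n γ} (h : IsSAW n γ) (k : ℕ) (hk : k ≤ n) : (γ k).2 ≤ k := by
  induction k with
  | zero => simp [h.start]
  | succ k ih =>
    have h1 := h.ystep (by omega : k < n)
    have h2 := ih (by omega)
    have := abs_le.mp h1
    push_cast
    omega

/-- Steps of a SAW as elements of a small finite type. -/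
def stepBox : Type := (Set.Icc (-1 : ℤ) 1) × (Set.Icc (-1 : ℤ) 1)

instance : Finite stepBox := by unfold stepBox; infer_instance

noncomputable def stepsOf (n : ℕ) (γ : ℕ → ℤ × ℤ) (hγ : IsSAW n γ) : Fin n → stepBox :=
  fun i => (⟨(γ (i+1)).1 - (γ i).1, by
      have := hγ.step i i.2
      have h1 := abs_nonneg ((γ (i + 1)).1 - (γ i).1)
      have h2 := abs_nonneg ((γ (i + 1)).2 - (γ i).2)
      constructor <;> [skip; skip] <;>
        · rcases abs_le.mp (show |(γ (i+1)).1 - (γ i).1| ≤ 1 by omega) with ⟨a, b⟩ <;> omega⟩,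
    ⟨(γ (i+1)).2 - (γ i).2, by
      have := hγ.step i i.2
      have h1 := abs_nonneg ((γ (i + 1)).1 - (γ i).1)
      have h2 := abs_nonneg ((γ (i + 1)).2 - (γ i).2)
      constructor <;>
        · rcases abs_le.mp (show |(γ (i+1)).2 - (γ i).2| ≤ 1 by omega) with ⟨a, b⟩ <;> omega⟩)

theorem stepsOf_inj (n : ℕ) :
    Function.Injective (fun γ : {γ : ℕ → ℤ × ℤ // IsSAW n γ} => stepsOf n γ.1 γ.2) := by
  rintro ⟨γ, hγ⟩ ⟨δ, hδ⟩ h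
  have key : ∀ k, k ≤ n → γ k = δ k := by
    intro k
    induction k with
    | zero => intro _; rw [hγ.start, hδ.start]
    | succ k ih =>
      intro hk
      have hs := congrFun h ⟨k, by omega⟩
      have h1 : (γ (k+1)).1 - (γ k).1 = (δ (k+1)).1 - (δ k).1 := by
        exact congrArg (fun p : stepBox => (p.1 : ℤ)) hs
      have h2 : (γ (k+1)).2 - (γ k).2 = (δ (k+1)).2 - (δ k).2 := by
        exact congrArg (fun p : stepBox => (p.2 : ℤ)) hs
      have hk' := ih (by omega)
      have e1 : (γ k).1 = (δ k).1 := by rw [hk']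
      have e2 : (γ k).2 = (δ k).2 := by rw [hk']
      exact Prod.ext (by omega) (by omega)
  apply Subtype.ext
  funext k
  show γ k = δ k
  rcases le_or_gt k n with hk | hk
  · rw [key k hk]
  · rw [hγ.pad k hk.le, hδ.pad k hk.le, key n le_rfl]

instance sawFinite (n : ℕ) : Finite {γ : ℕ → ℤ × ℤ // IsSAW n γ} :=
  Finite.of_injective _ (stepsOf_inj n)

instance bridgeFinite (n : ℕ) : Finite {γ : ℕ → ℤ × ℤ // IsBridge n γ} :=
  Finite.of_injective (fun γ => (⟨γ.1, γ.2.1⟩ : {γ : ℕ → ℤ × ℤ // IsSAW n γ}))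
    (fun a b h => by have h2 := congrArg Subtype.val h; exact Subtype.ext h2)

instance hswFinite (n : ℕ) : Finite {γ : ℕ → ℤ × ℤ // IsHSW n γ} :=
  Finite.of_injective (fun γ => (⟨γ.1, γ.2.1⟩ : {γ : ℕ → ℤ × ℤ // IsSAW n γ}))
    (fun a b h => by have h2 := congrArg Subtype.val h; exact Subtype.ext h2)

/-- The straight walk east. -/
theorem straight_isSAW (n : ℕ) : IsSAW n (fun k => ((min k n : ℕ), 0)) := by
  refine ⟨by simp, ?_, ?_, ?_⟩
  · intro i hi
    simp only
    rw [min_eq_left (by omega : i + 1 ≤ n), min_eq_left (by omega : i ≤ n)]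
    push_cast; simp
  · intro i hi j hj h
    have : ((min i n : ℕ) : ℤ) = ((min j n : ℕ) : ℤ) := congrArg Prod.fst h
    omega
  · intro i hi
    simp [min_eq_left, min_eq_right hi, Nat.min_self]

theorem one_le_cSAW (n : ℕ) : 1 ≤ cSAW n := by
  have : Nonempty {γ : ℕ → ℤ × ℤ // IsSAW n γ} := ⟨⟨_, straight_isSAW n⟩⟩
  exact Nat.one_le_iff_ne_zero.mpr (Nat.card_ne_zero.mpr ⟨this, sawFinite n⟩)

theorem cHSW_zero_le : cHSW 0 ≤ 1 := by
  have : Subsingleton {γ : ℕ → ℤ × ℤ // IsHSW 0 γ} := by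
    constructor
    rintro ⟨γ, hγ⟩ ⟨δ, hδ⟩
    apply Subtype.ext
    funext k
    show γ k = δ k
    rw [hγ.1.pad k (Nat.zero_le k), hδ.1.pad k (Nat.zero_le k), hγ.1.start, hδ.1.start]
  calc cHSW 0 ≤ Nat.card Unit :=
        Nat.card_le_card_of_injective (fun _ => Unit.unit)
          (fun a b _ => Subsingleton.elim a b)
    _ = 1 := Nat.card_unique


/-! ### Subwalks -/

theorem subwalk_isSAW {N : ℕ} {γ : ℕ → ℤ × ℤ} (h : IsSAW N γ) {a b : ℕ}
    (hab : a ≤ b) (hbN : b ≤ N) :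
    IsSAW (b - a) (fun k => γ (a + min k (b - a)) - γ a) := by
  refine ⟨by simp; rfl, ?_, ?_, ?_⟩
  · intro i hi
    simp only [Prod.fst_sub, Prod.snd_sub]
    rw [min_eq_left (by omega), min_eq_left (by omega),
      (by omega : a + (i + 1) = (a + i) + 1)]
    have := h.step (a + i) (by omega)
    convert this using 2 <;> ring
  · intro i hi j hj hij
    have : γ (a + min i (b - a)) = γ (a + min j (b - a)) := by
      have := sub_left_injective hij
      exact this
    have := h.inj _ (by omega) _ (by omega) this
    omega
  · intro i hi
    simp only
    rw [min_eq_right hi, min_self]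

theorem revwalk_isSAW {N : ℕ} {γ : ℕ → ℤ × ℤ} (h : IsSAW N γ) {a b : ℕ}
    (hab : a ≤ b) (hbN : b ≤ N) :
    IsSAW (b - a) (fun k => γ (b - min k (b - a)) - γ b) := by
  refine ⟨by simp; rfl, ?_, ?_, ?_⟩
  · intro i hi
    simp only [Prod.fst_sub, Prod.snd_sub]
    rw [min_eq_left (by omega), min_eq_left (by omega)]
    have hs := h.step (b - (i + 1)) (by omega)
    rw [(by omega : b - (i+1) + 1 = b - i)] at hs
    rw [← hs]
    rw [abs_sub_comm ((γ (b - i)).1) _, abs_sub_comm ((γ (b - i)).2) _]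
    congr 2 <;> ring
  · intro i hi j hj hij
    have : γ (b - min i (b - a)) = γ (b - min j (b - a)) := sub_left_injective hij
    have := h.inj _ (by omega) _ (by omega) this
    omega
  · intro i hi
    simp only
    rw [min_eq_right hi, min_self]

/-! ### Submultiplicativity of `cSAW` -/

theorem cSAW_submul (a b : ℕ) : cSAW (a + b) ≤ cSAW a * cSAW b := by
  classical
  have key : ∀ γ : {γ : ℕ → ℤ × ℤ // IsSAW (a+b) γ},
      IsSAW a (fun k => γ.1 (0 + min k (a - 0)) - γ.1 0) ∧
      IsSAW b (fun k => γ.1 (a + min k ((a+b) - a)) - γ.1 a) := by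
    rintro ⟨γ, hγ⟩
    constructor
    · have := subwalk_isSAW hγ (Nat.zero_le a) (by omega)
      simpa using this
    · have := subwalk_isSAW hγ (Nat.le_add_right a b) le_rfl
      simpa using this
  set Ψ : {γ : ℕ → ℤ × ℤ // IsSAW (a+b) γ} →
      {γ : ℕ → ℤ × ℤ // IsSAW a γ} × {γ : ℕ → ℤ × ℤ // IsSAW b γ} :=
    fun γ => (⟨_, (key γ).1⟩, ⟨_, (key γ).2⟩) with hΨ
  have hinj : Function.Injective Ψ := by
    rintro ⟨γ, hγ⟩ ⟨δ, hδ⟩ h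
    have h1 := congrArg (fun p => p.1.1) h
    have h2 := congrArg (fun p => p.2.1) h
    simp only [hΨ] at h1 h2
    have e1 : ∀ k, γ (0 + min k (a - 0)) - γ 0 = δ (0 + min k (a - 0)) - δ 0 :=
      fun k => congrFun h1 k
    have e2 : ∀ k, γ (a + min k ((a+b) - a)) - γ a = δ (a + min k ((a+b) - a)) - δ a :=
      fun k => congrFun h2 k
    have hfirst : ∀ k, k ≤ a → γ k = δ k := by
      intro k hk
      have := e1 k
      rw [hγ.start, hδ.start] at this
      simpa [Nat.sub_zero, min_eq_left hk] using this
    apply Subtype.ext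
    funext k
    show γ k = δ k
    rcases le_or_gt k a with hk | hk
    · exact hfirst k hk
    · have ha : γ a = δ a := hfirst a le_rfl
      have := e2 (k - a)
      rw [ha] at this
      have h3 : γ (a + min (k-a) ((a+b) - a)) = δ (a + min (k-a) ((a+b) - a)) :=
        sub_left_injective this
      rcases le_or_gt k (a + b) with hk2 | hk2
      · rwa [(by omega : a + min (k-a) ((a+b) - a) = k)] at h3
      · rw [(by omega : a + min (k-a) ((a+b) - a) = a + b)] at h3
        rw [hγ.pad k (by omega), hδ.pad k (by omega)]
        exact h3
  calc cSAW (a+b) ≤ Nat.card ({γ : ℕ → ℤ × ℤ // IsSAW a γ} × {γ : ℕ → ℤ × ℤ // IsSAW b γ}) :=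
        Nat.card_le_card_of_injective Ψ hinj
    _ = cSAW a * cSAW b := Nat.card_prod _ _

/-! ### Supermultiplicativity of `cSAB` -/

theorem IsBridge.y_nonneg {n : ℕ} {γ : ℕ → ℤ × ℤ} (h : IsBridge n γ) (k : ℕ) (hk : k ≤ n) :
    0 ≤ (γ k).2 := by
  rcases Nat.eq_zero_or_pos k with rfl | hk0
  · rw [h.1.start]
  · exact (h.2 k hk0 hk).1.le

theorem cSAB_supermul (a b : ℕ) : cSAB a * cSAB b ≤ cSAB (a + b) := by
  classical
  set Θ : (ℕ → ℤ × ℤ) → (ℕ → ℤ × ℤ) → (ℕ → ℤ × ℤ) :=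
    fun γ δ k => if k ≤ a then γ k else δ (k - a) + γ a with hΘ
  have key : ∀ (γ δ : ℕ → ℤ × ℤ), IsBridge a γ → IsBridge b δ → IsBridge (a+b) (Θ γ δ) := by
    intro γ δ hγ hδ
    have hγa0 : 0 ≤ (γ a).2 := hγ.y_nonneg a le_rfl
    have hδ0 : δ 0 = (0,0) := hδ.1.start
    have hpt : ∀ k, ¬ (k ≤ a) → (Θ γ δ k) = δ (k - a) + γ a := by
      intro k hk; simp only [hΘ, if_neg hk]
    have hpt' : ∀ k, k ≤ a → (Θ γ δ k) = γ k := by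
      intro k hk; simp only [hΘ, if_pos hk]
    have hend : (Θ γ δ (a+b)).2 = (δ b).2 + (γ a).2 := by
      rcases Nat.eq_zero_or_pos b with rfl | hb
      · simp only [hΘ, Nat.add_zero, if_pos le_rfl]
        rw [hδ0]
        simp
      · rw [hpt (a+b) (by omega)]
        simp [Nat.add_sub_cancel_left]
    refine ⟨⟨?_, ?_, ?_, ?_⟩, ?_⟩
    · simp [hΘ, hγ.1.start]
    · intro i hi
      rcases le_or_gt (i+1) a with h1 | h1
      · rw [hpt' (i+1) h1, hpt' i (by omega)]
        exact hγ.1.step i (by omega)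
      · rcases le_or_gt i a with h2 | h2
        · -- i = a
          have hia : i = a := by omega
          subst hia
          rw [hpt (i+1) (by omega), hpt' i le_rfl]
          have hb : 0 < b := by omega
          have := hδ.1.step 0 hb
          rw [hδ0] at this
          simp only [(by omega : i + 1 - i = 1)]
          simp only [Prod.fst_add, Prod.snd_add, Prod.fst_sub, Prod.snd_sub]
          simpa using this
        · rw [hpt (i+1) (by omega), hpt i (by omega)]
          have := hδ.1.step (i - a) (by omega)
          rw [(by omega : i - a + 1 = i + 1 - a)] at this
          simp only [Prod.fst_add, Prod.snd_add]
          convert this using 2 <;> ring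
    · intro i hi j hj hij
      rcases le_or_gt i a with h1 | h1 <;> rcases le_or_gt j a with h2 | h2
      · rw [hpt' i h1, hpt' j h2] at hij
        exact hγ.1.inj i h1 j h2 hij
      · exfalso
        rw [hpt' i h1, hpt j (by omega)] at hij
        have hyj : 0 < (δ (j - a)).2 := (hδ.2 (j-a) (by omega) (by omega)).1
        have hyi : (γ i).2 ≤ (γ a).2 := by
          rcases Nat.eq_zero_or_pos i with rfl | hi0
          · rw [hγ.1.start]; exact hγa0
          · rcases Nat.eq_zero_or_pos a with rfl | ha0
            · omega
            · have := (hγ.2 i hi0 h1).2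
              have ha := hγ.2 a ha0 le_rfl
              omega
        have := congrArg Prod.snd hij
        simp only [Prod.snd_add] at this
        omega
      · exfalso
        rw [hpt' j h2, hpt i (by omega)] at hij
        have hyj : 0 < (δ (i - a)).2 := (hδ.2 (i-a) (by omega) (by omega)).1
        have hyi : (γ j).2 ≤ (γ a).2 := by
          rcases Nat.eq_zero_or_pos j with rfl | hj0
          · rw [hγ.1.start]; exact hγa0
          · exact (hγ.2 j hj0 h2).2
        have := congrArg Prod.snd hij
        simp only [Prod.snd_add] at this
        omega
      · rw [hpt i (by omega), hpt j (by omega)] at hij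
        have : δ (i - a) = δ (j - a) := by
          have := add_right_cancel hij
          exact this
        have := hδ.1.inj (i-a) (by omega) (j-a) (by omega) this
        omega
    · intro i hi
      rcases le_or_gt i a with h1 | h1
      · have : i = a ∧ b = 0 := by omega
        rw [hpt' i h1, this.1, (by omega : a + b = a), hpt' a le_rfl]
      · rw [hpt i (by omega)]
        rcases le_or_gt (a+b) a with h2 | h2
        · have hb0 : b = 0 := by omega
          rw [hpt' (a+b) h2]
          rw [hδ.1.pad (i - a) (by omega), hb0, hδ0]
          simp [(by omega : a + b = a)]
        · rw [hpt (a+b) (by omega)]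
          rw [hδ.1.pad (i - a) (by omega)]
          congr 2
          omega
    · intro k hk0 hk
      constructor
      · rcases le_or_gt k a with h1 | h1
        · rw [hpt' k h1]
          exact (hγ.2 k hk0 h1).1
        · rw [hpt k (by omega)]
          have := (hδ.2 (k-a) (by omega) (by omega)).1
          simp only [Prod.snd_add]
          omega
      · rw [hend]
        rcases le_or_gt k a with h1 | h1
        · rw [hpt' k h1]
          have h2 : (γ k).2 ≤ (γ a).2 := by
            rcases Nat.eq_zero_or_pos a with rfl | ha0
            · omega
            · have := (hγ.2 k hk0 h1).2
              have ha := hγ.2 a ha0 le_rfl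
              omega
          have h3 : 0 ≤ (δ b).2 := hδ.y_nonneg b le_rfl
          omega
        · rw [hpt k (by omega)]
          have := (hδ.2 (k-a) (by omega) (by omega)).2
          simp only [Prod.snd_add]
          omega
  set Ψ : {γ : ℕ → ℤ × ℤ // IsBridge a γ} × {γ : ℕ → ℤ × ℤ // IsBridge b γ} →
      {γ : ℕ → ℤ × ℤ // IsBridge (a+b) γ} :=
    fun p => ⟨Θ p.1.1 p.2.1, key _ _ p.1.2 p.2.2⟩ with hΨ
  have hinj : Function.Injective Ψ := by
    rintro ⟨⟨γ, hγ⟩, ⟨δ, hδ⟩⟩ ⟨⟨γ', hγ'⟩, ⟨δ', hδ'⟩⟩ h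
    have h0 : ∀ k, Θ γ δ k = Θ γ' δ' k := by
      intro k
      exact congrFun (congrArg Subtype.val h) k
    have hg : ∀ k, γ k = γ' k := by
      intro k
      rcases le_or_gt k a with hk | hk
      · have := h0 k
        simpa only [hΘ, if_pos hk] using this
      · rw [hγ.1.pad k hk.le, hγ'.1.pad k hk.le]
        have := h0 a
        simpa only [hΘ, if_pos le_rfl] using this
    have hga : γ a = γ' a := hg a
    have hd : ∀ k, δ k = δ' k := by
      intro k
      rcases Nat.eq_zero_or_pos k with rfl | hk0
      · rw [hδ.1.start, hδ'.1.start]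
      · rcases le_or_gt k b with hk | hk
        · have := h0 (a + k)
          simp only [hΘ, if_neg (by omega : ¬ (a + k ≤ a)), Nat.add_sub_cancel_left] at this
          rw [hga] at this
          exact add_right_cancel this
        · rw [hδ.1.pad k hk.le, hδ'.1.pad k hk.le]
          rcases Nat.eq_zero_or_pos b with rfl | hb0
          · rw [hδ.1.start, hδ'.1.start]
          · have := h0 (a + b)
            simp only [hΘ, if_neg (by omega : ¬ (a + b ≤ a)), Nat.add_sub_cancel_left] at this
            rw [hga] at this
            exact add_right_cancel this
    exact Prod.ext (Subtype.ext (funext hg)) (Subtype.ext (funext hd))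
  calc cSAB a * cSAB b
      = Nat.card ({γ : ℕ → ℤ × ℤ // IsBridge a γ} × {γ : ℕ → ℤ × ℤ // IsBridge b γ}) :=
        (Nat.card_prod _ _).symm
    _ ≤ cSAB (a+b) := Nat.card_le_card_of_injective Ψ hinj

theorem cSAB_le_cSAW (n : ℕ) : cSAB n ≤ cSAW n :=
  Nat.card_le_card_of_injective
    (fun γ => (⟨γ.1, γ.2.1⟩ : {γ : ℕ → ℤ × ℤ // IsSAW n γ}))
    (fun x y h => by have h2 := congrArg Subtype.val h; exact Subtype.ext h2)

/-! ### The connective constant -/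

theorem cSAW_pow (N k : ℕ) : cSAW (N * k) ≤ cSAW N ^ k := by
  induction k with
  | zero =>
    have hsub : Subsingleton {γ : ℕ → ℤ × ℤ // IsSAW 0 γ} := by
      constructor
      rintro ⟨γ, hγ⟩ ⟨δ, hδ⟩
      apply Subtype.ext
      funext k
      show γ k = δ k
      rw [hγ.pad k (Nat.zero_le k), hδ.pad k (Nat.zero_le k), hγ.start, hδ.start]
    have : cSAW 0 ≤ 1 := by
      calc cSAW 0 ≤ Nat.card Unit :=
            Nat.card_le_card_of_injective (fun _ => Unit.unit)
              (fun a b _ => Subsingleton.elim a b)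
        _ = 1 := Nat.card_unique
    simpa using this
  | succ k ih =>
    calc cSAW (N * (k+1)) = cSAW (N * k + N) := by ring_nf
      _ ≤ cSAW (N * k) * cSAW N := cSAW_submul _ _
      _ ≤ cSAW N ^ k * cSAW N := Nat.mul_le_mul_right _ ih
      _ = cSAW N ^ (k+1) := by ring

theorem cSAB_pow (n k : ℕ) : cSAB n ^ k ≤ cSAB (n * k) := by
  induction k with
  | zero =>
    have : Nonempty {γ : ℕ → ℤ × ℤ // IsBridge 0 γ} := by
      refine ⟨⟨_, straight_isSAW 0, ?_⟩⟩
      intro k hk0 hk; omega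
    simpa [cSAB] using Nat.one_le_iff_ne_zero.mpr (Nat.card_ne_zero.mpr ⟨this, bridgeFinite 0⟩)
  | succ k ih =>
    calc cSAB n ^ (k+1) = cSAB n ^ k * cSAB n := by ring
      _ ≤ cSAB (n * k) * cSAB n := Nat.mul_le_mul_right _ ih
      _ ≤ cSAB (n * k + n) := cSAB_supermul _ _
      _ = cSAB (n * (k+1)) := by ring_nf

theorem one_le_mu : 1 ≤ mu := by
  apply le_ciInf
  intro n
  apply Real.one_le_rpow
  · exact_mod_cast one_le_cSAW (n+1)
  · positivity

theorem mu_pos : 0 < mu := lt_of_lt_of_le one_pos one_le_mu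

theorem mu_bddBelow : BddBelow (Set.range fun n : ℕ => ((cSAW (n + 1) : ℝ)) ^ ((1 : ℝ) / (n + 1))) := by
  refine ⟨0, ?_⟩
  rintro x ⟨n, rfl⟩
  exact Real.rpow_nonneg (by positivity) _

theorem mu_le_cSAW_one : mu ≤ (cSAW 1 : ℝ) := by
  have h := ciInf_le mu_bddBelow 0
  refine le_trans h ?_
  norm_num

theorem exists_cSAW_le (ε : ℝ) (hε : 0 < ε) :
    ∃ N : ℕ, 1 ≤ N ∧ (cSAW N : ℝ) ≤ (mu + ε) ^ N := by
  have h : mu < mu + ε := by linarith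
  obtain ⟨n, hn⟩ := exists_lt_of_ciInf_lt (show mu < mu + ε from h)
  refine ⟨n + 1, by omega, ?_⟩
  have h0 : (0:ℝ) ≤ (cSAW (n+1) : ℝ) := by positivity
  have key : ((cSAW (n+1) : ℝ) ^ ((1:ℝ)/(n+1))) ^ (n+1) = (cSAW (n+1) : ℝ) := by
    rw [show (1:ℝ)/(n+1) = ((n+1 : ℕ) : ℝ)⁻¹ by push_cast; rw [one_div]]
    exact Real.rpow_inv_natCast_pow h0 (by omega)
  calc (cSAW (n+1) : ℝ) = ((cSAW (n+1) : ℝ) ^ ((1:ℝ)/(n+1))) ^ (n+1) := key.symm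
    _ ≤ (mu + ε) ^ (n+1) := by
        apply pow_le_pow_left₀ (Real.rpow_nonneg h0 _) hn.le

theorem cSAB_le_mu_pow (n : ℕ) : (cSAB n : ℝ) ≤ mu ^ n := by
  have main : ∀ ε : ℝ, 0 < ε → (cSAB n : ℝ) ≤ (mu + ε) ^ n := by
    intro ε hε
    obtain ⟨N, hN1, hN⟩ := exists_cSAW_le ε hε
    have h1 : cSAB n ^ N ≤ cSAW N ^ n := by
      calc cSAB n ^ N ≤ cSAB (n * N) := cSAB_pow n N
        _ ≤ cSAW (n * N) := cSAB_le_cSAW _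
        _ = cSAW (N * n) := by ring_nf
        _ ≤ cSAW N ^ n := cSAW_pow N n
    have h2 : ((cSAB n : ℝ)) ^ N ≤ ((mu + ε) ^ n) ^ N := by
      calc ((cSAB n : ℝ)) ^ N = ((cSAB n ^ N : ℕ) : ℝ) := by push_cast; ring
        _ ≤ ((cSAW N ^ n : ℕ) : ℝ) := by exact_mod_cast h1
        _ = ((cSAW N : ℝ)) ^ n := by push_cast; ring
        _ ≤ ((mu + ε) ^ N) ^ n := by
            apply pow_le_pow_left₀ (by positivity) hN
        _ = ((mu + ε) ^ n) ^ N := by rw [← pow_mul, ← pow_mul, Nat.mul_comm]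
    have hb : (0:ℝ) ≤ (mu + ε) ^ n := by
      have := one_le_mu; positivity
    exact le_of_pow_le_pow_left₀ (by omega) hb h2
  have T : Filter.Tendsto (fun ε : ℝ => (mu + ε) ^ n) (nhdsWithin 0 (Set.Ioi 0)) (nhds (mu ^ n)) := by
    have : Filter.Tendsto (fun ε : ℝ => (mu + ε) ^ n) (nhds 0) (nhds ((mu + 0) ^ n)) := by
      apply Filter.Tendsto.pow
      exact (continuous_const.add continuous_id).tendsto 0
    rw [add_zero] at this
    exact this.mono_left nhdsWithin_le_nhds
  exact ge_of_tendsto T (eventually_nhdsWithin_of_forall (fun ε hε => main ε hε))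

/-! ### Splitting a SAW into two half-space walks -/

noncomputable def yminW (n : ℕ) (γ : ℕ → ℤ × ℤ) : ℤ :=
  ((Finset.range (n+1)).image (fun k => (γ k).2)).min'
    (Finset.Nonempty.image ⟨0, Finset.mem_range.mpr (Nat.succ_pos n)⟩ _)

noncomputable def iminW (n : ℕ) (γ : ℕ → ℤ × ℤ) : ℕ :=
  ((Finset.range (n+1)).filter (fun k => (γ k).2 = yminW n γ)).max'
    (by
      obtain ⟨k, hk, hke⟩ := Finset.mem_image.mp (Finset.min'_mem _
        (Finset.Nonempty.image ⟨0, Finset.mem_range.mpr (Nat.succ_pos n)⟩ (fun k => (γ k).2)))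
      exact ⟨k, Finset.mem_filter.mpr ⟨hk, hke⟩⟩)

theorem yminW_le (n : ℕ) (γ : ℕ → ℤ × ℤ) {k : ℕ} (hk : k ≤ n) : yminW n γ ≤ (γ k).2 :=
  Finset.min'_le _ _ (Finset.mem_image_of_mem _ (Finset.mem_range.mpr (by omega)))

theorem iminW_mem (n : ℕ) (γ : ℕ → ℤ × ℤ) :
    iminW n γ ∈ (Finset.range (n+1)).filter (fun k => (γ k).2 = yminW n γ) :=
  Finset.max'_mem _ _

theorem iminW_le (n : ℕ) (γ : ℕ → ℤ × ℤ) : iminW n γ ≤ n := by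
  have := (Finset.mem_filter.mp (iminW_mem n γ)).1
  have := Finset.mem_range.mp this
  omega

theorem iminW_spec (n : ℕ) (γ : ℕ → ℤ × ℤ) : (γ (iminW n γ)).2 = yminW n γ :=
  (Finset.mem_filter.mp (iminW_mem n γ)).2

theorem yminW_lt (n : ℕ) (γ : ℕ → ℤ × ℤ) {k : ℕ} (hik : iminW n γ < k) (hk : k ≤ n) :
    yminW n γ < (γ k).2 := by
  rcases lt_or_eq_of_le (yminW_le n γ hk) with h | h
  · exact h
  · exfalso
    have hmem : k ∈ (Finset.range (n+1)).filter (fun k => (γ k).2 = yminW n γ) :=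
      Finset.mem_filter.mpr ⟨Finset.mem_range.mpr (by omega), h.symm⟩
    have h2 : k ≤ iminW n γ := by
      unfold iminW
      exact Finset.le_max' _ k hmem
    omega

theorem prepend_isHSW {L : ℕ} {ρ : ℕ → ℤ × ℤ} (h : IsSAW L ρ) (hy : ∀ k, 0 ≤ (ρ k).2) :
    IsHSW (L+1) (fun j => if j = 0 then ((0:ℤ),(0:ℤ)) else ρ (j-1) + (0,1)) := by
  constructor
  · refine ⟨by simp, ?_, ?_, ?_⟩
    · intro i hi
      rcases Nat.eq_zero_or_pos i with rfl | hi0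
      · simp [h.start]
      · simp only [if_neg (by omega : ¬ i + 1 = 0), if_neg (by omega : ¬ i = 0)]
        simp only [Prod.fst_add, Prod.snd_add]
        have := h.step (i-1) (by omega)
        rw [(by omega : i - 1 + 1 = i + 1 - 1)] at this
        convert this using 2 <;> ring
    · intro i hi j hj hij
      beta_reduce at hij
      rcases Nat.eq_zero_or_pos i with rfl | hi0 <;> rcases Nat.eq_zero_or_pos j with rfl | hj0
      · rfl
      · exfalso
        rw [if_pos rfl, if_neg (by omega : ¬ j = 0)] at hij
        have h2 := congrArg Prod.snd hij
        simp at h2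
        have := hy (j-1)
        omega
      · exfalso
        rw [if_neg (by omega : ¬ i = 0), if_pos rfl] at hij
        have h2 := congrArg Prod.snd hij
        simp at h2
        have := hy (i-1)
        omega
      · rw [if_neg (by omega : ¬ i = 0), if_neg (by omega : ¬ j = 0)] at hij
        have := h.inj (i-1) (by omega) (j-1) (by omega) (add_right_cancel hij)
        omega
    · intro i hi
      simp only [if_neg (by omega : ¬ i = 0), if_neg (by omega : ¬ L + 1 = 0)]
      rw [h.pad (i-1) (by omega), (by omega : L + 1 - 1 = L)]
  · intro k hk0 hk
    simp only [if_neg (by omega : ¬ k = 0), Prod.snd_add]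
    have := hy (k-1)
    norm_num
    omega

noncomputable def splitB (n : ℕ) (γ : ℕ → ℤ × ℤ) : ℕ → ℤ × ℤ :=
  fun j => if j = 0 then ((0:ℤ),(0:ℤ))
    else (γ (iminW n γ - min (j-1) (iminW n γ)) - γ (iminW n γ)) + (0,1)

noncomputable def splitF (n : ℕ) (γ : ℕ → ℤ × ℤ) : ℕ → ℤ × ℤ :=
  fun k => γ (iminW n γ + min k (n - iminW n γ)) - γ (iminW n γ)

theorem cSAW_le_sum_cHSW (n : ℕ) :
    cSAW n ≤ ∑ i ∈ Finset.range (n+1), cHSW (i+1) * cHSW (n-i) := by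
  classical
  have hB : ∀ γ : ℕ → ℤ × ℤ, ∀ j, splitB n γ j = if j = 0 then ((0:ℤ),(0:ℤ))
      else (γ (iminW n γ - min (j-1) (iminW n γ)) - γ (iminW n γ)) + (0,1) :=
    fun γ j => rfl
  have hF : ∀ γ : ℕ → ℤ × ℤ, ∀ k,
      splitF n γ k = γ (iminW n γ + min k (n - iminW n γ)) - γ (iminW n γ) :=
    fun γ k => rfl
  have hBsaw : ∀ γ : ℕ → ℤ × ℤ, IsSAW n γ → IsHSW (iminW n γ + 1) (splitB n γ) := by
    intro γ hγ
    have hrev := revwalk_isSAW hγ (Nat.zero_le (iminW n γ)) (iminW_le n γ)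
    rw [Nat.sub_zero] at hrev
    have h2 := prepend_isHSW hrev (fun k => by
      simp only [Prod.snd_sub]
      rw [iminW_spec n γ]
      have := yminW_le n γ (show iminW n γ - min k (iminW n γ) ≤ n by
        have := iminW_le n γ; omega)
      omega)
    exact h2
  have hFsaw : ∀ γ : ℕ → ℤ × ℤ, IsSAW n γ → IsHSW (n - iminW n γ) (splitF n γ) := by
    intro γ hγ
    refine ⟨subwalk_isSAW hγ (iminW_le n γ) le_rfl, ?_⟩
    intro k hk0 hk
    rw [hF]
    simp only [Prod.snd_sub]
    rw [iminW_spec n γ]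
    have him := iminW_le n γ
    have h2 := yminW_lt n γ (show iminW n γ < iminW n γ + min k (n - iminW n γ) by omega)
      (show iminW n γ + min k (n - iminW n γ) ≤ n by omega)
    omega
  have hinj : Function.Injective (fun γ : {γ : ℕ → ℤ × ℤ // IsSAW n γ} =>
      (⟨⟨iminW n γ.1, by have := iminW_le n γ.1; omega⟩,
        (⟨splitB n γ.1, hBsaw γ.1 γ.2⟩, ⟨splitF n γ.1, hFsaw γ.1 γ.2⟩)⟩ :
        Σ i : Fin (n+1), {γ : ℕ → ℤ × ℤ // IsHSW (i.1+1) γ} ×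
          {γ : ℕ → ℤ × ℤ // IsHSW (n-i.1) γ})) := by
    rintro ⟨γ, hγ⟩ ⟨δ, hδ⟩ h
    have hIδ : iminW n δ = iminW n γ :=
      (congrArg (fun p : (Σ i : Fin (n+1), {γ : ℕ → ℤ × ℤ // IsHSW (i.1+1) γ} ×
        {γ : ℕ → ℤ × ℤ // IsHSW (n-i.1) γ}) => p.1.1) h).symm
    have hBeq : ∀ j, splitB n γ j = splitB n δ j := fun j =>
      congrFun (congrArg (fun p : (Σ i : Fin (n+1), {γ : ℕ → ℤ × ℤ // IsHSW (i.1+1) γ} ×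
        {γ : ℕ → ℤ × ℤ // IsHSW (n-i.1) γ}) => p.2.1.1) h) j
    have hFeq : ∀ j, splitF n γ j = splitF n δ j := fun j =>
      congrFun (congrArg (fun p : (Σ i : Fin (n+1), {γ : ℕ → ℤ × ℤ // IsHSW (i.1+1) γ} ×
        {γ : ℕ → ℤ × ℤ // IsHSW (n-i.1) γ}) => p.2.2.1) h) j
    have hin : iminW n γ ≤ n := iminW_le n γ
    have hstart : γ (iminW n γ) = δ (iminW n γ) := by
      have e := hBeq (iminW n γ + 1)
      rw [hB, hB] at e
      simp only [hIδ, if_neg (show ¬ (iminW n γ + 1 = 0) by omega),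
        Nat.add_sub_cancel, min_self, Nat.sub_self] at e
      rw [hγ.start, hδ.start] at e
      exact sub_right_injective (add_right_cancel e)
    apply Subtype.ext
    funext k
    show γ k = δ k
    rcases le_or_gt k (iminW n γ) with hk | hk
    · have e := hBeq (iminW n γ - k + 1)
      simp only [hB, hIδ, if_neg (show ¬ (iminW n γ - k + 1 = 0) by omega),
        Nat.add_sub_cancel] at e
      rw [min_eq_left (by omega : iminW n γ - k ≤ iminW n γ),
        (by omega : iminW n γ - (iminW n γ - k) = k)] at e
      have h2 := add_right_cancel e
      rw [hstart] at h2
      exact sub_left_injective h2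
    · have e := hFeq (k - iminW n γ)
      simp only [hF, hIδ] at e
      rw [hstart] at e
      have h2 := sub_left_injective e
      rcases le_or_gt k n with hk2 | hk2
      · rwa [(by omega : iminW n γ + min (k - iminW n γ) (n - iminW n γ) = k)] at h2
      · rw [(by omega : iminW n γ + min (k - iminW n γ) (n - iminW n γ) = n)] at h2
        rw [hγ.pad k (by omega), hδ.pad k (by omega)]
        exact h2
  have step1 : cSAW n ≤ Nat.card (Σ i : Fin (n+1),
      {γ : ℕ → ℤ × ℤ // IsHSW (i.1+1) γ} × {γ : ℕ → ℤ × ℤ // IsHSW (n-i.1) γ}) :=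
    Nat.card_le_card_of_injective _ hinj
  have step2 : Nat.card (Σ i : Fin (n+1),
      {γ : ℕ → ℤ × ℤ // IsHSW (i.1+1) γ} × {γ : ℕ → ℤ × ℤ // IsHSW (n-i.1) γ})
      = ∑ i ∈ Finset.range (n+1), cHSW (i+1) * cHSW (n-i) := by
    letI : ∀ m : ℕ, Fintype {γ : ℕ → ℤ × ℤ // IsHSW m γ} := fun m => Fintype.ofFinite _
    rw [Nat.card_eq_fintype_card, Fintype.card_sigma]
    rw [← Fin.sum_univ_eq_sum_range (fun i => cHSW (i+1) * cHSW (n-i)) (n+1)]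
    congr 1
    funext i
    rw [Fintype.card_prod]
    simp only [cHSW, Nat.card_eq_fintype_card]
  omega

/-! ### Unfolding half-space walks into bridges -/

noncomputable def Amax (n : ℕ) (γ : ℕ → ℤ × ℤ) : ℤ :=
  ((Finset.range (n+1)).image (fun k => (γ k).2)).max'
    (Finset.Nonempty.image ⟨0, Finset.mem_range.mpr (Nat.succ_pos n)⟩ _)

noncomputable def tmax (n : ℕ) (γ : ℕ → ℤ × ℤ) : ℕ :=
  ((Finset.range (n+1)).filter (fun k => (γ k).2 = Amax n γ)).max'
    (by
      obtain ⟨k, hk, hke⟩ := Finset.mem_image.mp (Finset.max'_mem _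
        (Finset.Nonempty.image ⟨0, Finset.mem_range.mpr (Nat.succ_pos n)⟩ (fun k => (γ k).2)))
      exact ⟨k, Finset.mem_filter.mpr ⟨hk, hke⟩⟩)

theorem le_Amax (n : ℕ) (γ : ℕ → ℤ × ℤ) {k : ℕ} (hk : k ≤ n) : (γ k).2 ≤ Amax n γ := by
  apply Finset.le_max'
  exact Finset.mem_image_of_mem _ (Finset.mem_range.mpr (by omega))

theorem tmax_mem (n : ℕ) (γ : ℕ → ℤ × ℤ) :
    tmax n γ ∈ (Finset.range (n+1)).filter (fun k => (γ k).2 = Amax n γ) :=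
  Finset.max'_mem _ _

theorem tmax_le (n : ℕ) (γ : ℕ → ℤ × ℤ) : tmax n γ ≤ n := by
  have := Finset.mem_range.mp (Finset.mem_filter.mp (tmax_mem n γ)).1
  omega

theorem tmax_spec (n : ℕ) (γ : ℕ → ℤ × ℤ) : (γ (tmax n γ)).2 = Amax n γ :=
  (Finset.mem_filter.mp (tmax_mem n γ)).2

theorem y_lt_of_gt_tmax (n : ℕ) (γ : ℕ → ℤ × ℤ) {k : ℕ} (hik : tmax n γ < k) (hk : k ≤ n) :
    (γ k).2 < Amax n γ := by
  rcases lt_or_eq_of_le (le_Amax n γ hk) with h | h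
  · exact h
  · exfalso
    have hmem : k ∈ (Finset.range (n+1)).filter (fun k => (γ k).2 = Amax n γ) :=
      Finset.mem_filter.mpr ⟨Finset.mem_range.mpr (by omega), h⟩
    have h2 : k ≤ tmax n γ := by
      unfold tmax
      exact Finset.le_max' _ k hmem
    omega

noncomputable def mmin (n : ℕ) (γ : ℕ → ℤ × ℤ) : ℤ :=
  ((Finset.Icc (tmax n γ) n).image (fun k => (γ k).2)).min'
    (Finset.Nonempty.image ⟨tmax n γ, Finset.mem_Icc.mpr ⟨le_rfl, tmax_le n γ⟩⟩ _)

theorem mmin_le (n : ℕ) (γ : ℕ → ℤ × ℤ) {k : ℕ} (h1 : tmax n γ ≤ k) (h2 : k ≤ n) :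
    mmin n γ ≤ (γ k).2 :=
  Finset.min'_le _ _ (Finset.mem_image_of_mem _ (Finset.mem_Icc.mpr ⟨h1, h2⟩))

theorem mmin_exists (n : ℕ) (γ : ℕ → ℤ × ℤ) :
    ∃ k, tmax n γ ≤ k ∧ k ≤ n ∧ (γ k).2 = mmin n γ := by
  obtain ⟨k, hk, hke⟩ := Finset.mem_image.mp (Finset.min'_mem _
    (Finset.Nonempty.image ⟨tmax n γ, Finset.mem_Icc.mpr ⟨le_rfl, tmax_le n γ⟩⟩
      (fun k => (γ k).2)))
  exact ⟨k, (Finset.mem_Icc.mp hk).1, (Finset.mem_Icc.mp hk).2, hke⟩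

theorem le_mmin (n : ℕ) (γ : ℕ → ℤ × ℤ) {c : ℤ}
    (h : ∀ k, tmax n γ ≤ k → k ≤ n → c ≤ (γ k).2) : c ≤ mmin n γ := by
  obtain ⟨k, h1, h2, h3⟩ := mmin_exists n γ
  rw [← h3]; exact h k h1 h2

theorem mmin_le_Amax (n : ℕ) (γ : ℕ → ℤ × ℤ) : mmin n γ ≤ Amax n γ := by
  have := mmin_le n γ le_rfl (tmax_le n γ)
  rw [tmax_spec n γ] at this
  exact this

theorem mmin_le_yn (n : ℕ) (γ : ℕ → ℤ × ℤ) : mmin n γ ≤ (γ n).2 :=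
  mmin_le n γ (tmax_le n γ) le_rfl

noncomputable def Tspan (n : ℕ) (γ : ℕ → ℤ × ℤ) : ℤ := Amax n γ - mmin n γ

noncomputable def reflW (n : ℕ) (γ : ℕ → ℤ × ℤ) : ℕ → ℤ × ℤ :=
  fun k => if k ≤ tmax n γ then γ k else ((γ k).1, 2 * Amax n γ - (γ k).2)

noncomputable def unfoldW (n : ℕ) : ℕ → (ℕ → ℤ × ℤ) → Finset ℤ × (ℕ → ℤ × ℤ)
  | 0, γ => (∅, γ)
  | (fuel+1), γ =>
    if Amax n γ = (γ n).2 then (∅, γ)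
    else (insert (Tspan n γ) (unfoldW n fuel (reflW n γ)).1, (unfoldW n fuel (reflW n γ)).2)

/-! ### Basic positivity facts -/

section HSWfacts

variable {n : ℕ} {γ : ℕ → ℤ × ℤ}

theorem IsHSW.y_nonneg (h : IsHSW n γ) (k : ℕ) : 0 ≤ (γ k).2 := by
  rcases Nat.eq_zero_or_pos k with rfl | hk0
  · rw [h.1.start]
  · rcases le_or_gt k n with hk | hk
    · exact (h.2 k hk0 hk).le
    · rw [h.1.pad k hk.le]
      rcases Nat.eq_zero_or_pos n with rfl | hn0
      · rw [h.1.start]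
      · exact (h.2 n hn0 le_rfl).le

theorem IsHSW.y_le_Amax (h : IsSAW n γ) (k : ℕ) : (γ k).2 ≤ Amax n γ := by
  rcases le_or_gt k n with hk | hk
  · exact le_Amax n γ hk
  · rw [h.pad k hk.le]; exact le_Amax n γ le_rfl

theorem Amax_pos (h : IsHSW n γ) (hn : 1 ≤ n) : 1 ≤ Amax n γ := by
  have h1 := h.2 1 one_pos hn
  have := le_Amax n γ (show 1 ≤ n by omega)
  omega

theorem Amax_nonneg (h : IsHSW n γ) : 0 ≤ Amax n γ := by
  have := le_Amax n γ (Nat.zero_le n)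
  rw [h.1.start] at this
  exact this

theorem tmax_pos (h : IsHSW n γ) (hn : 1 ≤ n) : 1 ≤ tmax n γ := by
  by_contra hc
  have ht : tmax n γ = 0 := by omega
  have := tmax_spec n γ
  rw [ht, h.1.start] at this
  have := Amax_pos h hn
  simp at *
  omega

theorem mmin_pos (h : IsHSW n γ) (hn : 1 ≤ n) : 1 ≤ mmin n γ := by
  apply le_mmin
  intro k hk1 hk2
  have := tmax_pos h hn
  exact h.2 k (by omega) hk2

theorem Tspan_nonneg (h : IsHSW n γ) : 0 ≤ Tspan n γ := by
  have := mmin_le_Amax n γ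
  unfold Tspan
  omega

theorem bridge_of_test (h : IsHSW n γ) (ht : Amax n γ = (γ n).2) : IsBridge n γ := by
  refine ⟨h.1, fun k hk0 hk => ⟨(h.2 k hk0 hk), ?_⟩⟩
  rw [← ht]
  exact le_Amax n γ hk

theorem Amax_eq_yn_of_bridge (h : IsBridge n γ) : Amax n γ = (γ n).2 := by
  apply le_antisymm
  · apply Finset.max'_le
    intro y hy
    obtain ⟨k, hk, rfl⟩ := Finset.mem_image.mp hy
    have hk' := Finset.mem_range.mp hk
    rcases Nat.eq_zero_or_pos k with rfl | hk0
    · rw [h.1.start]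
      rcases Nat.eq_zero_or_pos n with rfl | hn0
      · rw [h.1.start]
      · exact ((h.2 n hn0 le_rfl).1.le).trans' (by norm_num)
    · rcases le_or_gt k n with hkn | hkn
      · exact (h.2 k hk0 hkn).2
      · have : k = n := by omega
        subst this; rfl
  · exact le_Amax n γ le_rfl

theorem test_of_not_bridge (h : IsHSW n γ) (ht : ¬ Amax n γ = (γ n).2) :
    mmin n γ < Amax n γ ∧ (γ n).2 < Amax n γ := by
  have h1 := mmin_le_yn n γ
  have h2 := le_Amax n γ (le_refl n)
  constructor <;> omega

theorem Tspan_pos (h : IsHSW n γ) (ht : ¬ Amax n γ = (γ n).2) : 1 ≤ Tspan n γ := by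
  have := (test_of_not_bridge h ht).1
  unfold Tspan
  omega

end HSWfacts

/-! ### Properties of the reflection -/

section Refl

variable {n : ℕ} {γ : ℕ → ℤ × ℤ}

theorem reflW_low {k : ℕ} (hk : k ≤ tmax n γ) : reflW n γ k = γ k := if_pos hk

theorem reflW_high {k : ℕ} (hk : ¬ (k ≤ tmax n γ)) :
    reflW n γ k = ((γ k).1, 2 * Amax n γ - (γ k).2) := if_neg hk

theorem reflW_y_ge (h : IsSAW n γ) {k : ℕ} (hk : ¬ (k ≤ tmax n γ)) :
    Amax n γ ≤ (reflW n γ k).2 := by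
  rw [reflW_high hk]
  have := IsHSW.y_le_Amax h k
  simp only
  omega

theorem reflW_isHSW (h : IsHSW n γ) (hn : 1 ≤ n) : IsHSW n (reflW n γ) := by
  have hA1 := Amax_pos h hn
  constructor
  · refine ⟨?_, ?_, ?_, ?_⟩
    · rw [reflW_low (Nat.zero_le _), h.1.start]
    · intro i hi
      rcases le_or_gt (i+1) (tmax n γ) with h1 | h1
      · rw [reflW_low h1, reflW_low (by omega)]
        exact h.1.step i hi
      · rcases le_or_gt i (tmax n γ) with h2 | h2
        · have hieq : i = tmax n γ := by omega
          rw [reflW_low h2, reflW_high (by omega)]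
          have hyi : (γ i).2 = Amax n γ := by rw [hieq]; exact tmax_spec n γ
          have := h.1.step i hi
          simp only
          rw [(by omega : 2 * Amax n γ - (γ (i+1)).2 - (γ i).2
            = -((γ (i+1)).2 - (γ i).2) + 2 * (Amax n γ - (γ i).2))]
          rw [hyi]
          simp only [sub_self, mul_zero, add_zero, abs_neg]
          rw [hyi] at this
          exact this
        · rw [reflW_high (by omega), reflW_high (by omega)]
          have := h.1.step i hi
          simp only
          rw [(by ring : 2 * Amax n γ - (γ (i+1)).2 - (2 * Amax n γ - (γ i).2)
            = -((γ (i+1)).2 - (γ i).2))]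
          rw [abs_neg]
          exact this
    · intro i hi j hj hij
      rcases le_or_gt i (tmax n γ) with h1 | h1 <;> rcases le_or_gt j (tmax n γ) with h2 | h2
      · rw [reflW_low h1, reflW_low h2] at hij
        exact h.1.inj i hi j hj hij
      · exfalso
        rw [reflW_low h1, reflW_high (by omega)] at hij
        have hylt := y_lt_of_gt_tmax n γ h2 hj
        have hyle := le_Amax n γ hi
        have := congrArg Prod.snd hij
        simp only at this
        omega
      · exfalso
        rw [reflW_high (by omega), reflW_low h2] at hij
        have hylt := y_lt_of_gt_tmax n γ h1 hi
        have hyle := le_Amax n γ hj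
        have := congrArg Prod.snd hij
        simp only at this
        omega
      · rw [reflW_high (by omega), reflW_high (by omega)] at hij
        have h3 := congrArg Prod.fst hij
        have h4 := congrArg Prod.snd hij
        simp only at h3 h4
        exact h.1.inj i hi j hj (Prod.ext h3 (by omega))
    · intro i hi
      have htn := tmax_le n γ
      rcases le_or_gt i (tmax n γ) with h1 | h1
      · have : i = n ∧ tmax n γ = n := by omega
        rw [this.1, reflW_low (by omega)]
      · rw [reflW_high (by omega)]
        rcases le_or_gt n (tmax n γ) with h2 | h2
        · have ht : tmax n γ = n := by omega
          rw [reflW_low (by omega : n ≤ tmax n γ)]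
          have hyn : (γ n).2 = Amax n γ := by
            have h5 := tmax_spec n γ; rw [ht] at h5; exact h5
          rw [h.1.pad i (by omega)]
          rw [hyn]
          exact Prod.ext rfl (by omega)
        · rw [reflW_high (by omega)]
          rw [h.1.pad i (by omega)]
  · intro k hk0 hk
    rcases le_or_gt k (tmax n γ) with h1 | h1
    · rw [reflW_low h1]
      exact h.2 k hk0 hk
    · have := reflW_y_ge h.1 (by omega : ¬ (k ≤ tmax n γ))
      omega

theorem Amax_reflW (h : IsHSW n γ) (hn : 1 ≤ n) :
    Amax n (reflW n γ) = 2 * Amax n γ - mmin n γ := by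
  apply le_antisymm
  · apply Finset.max'_le
    intro y hy
    obtain ⟨k, hk, rfl⟩ := Finset.mem_image.mp hy
    have hk' := Finset.mem_range.mp hk
    rcases le_or_gt k (tmax n γ) with h1 | h1
    · rw [reflW_low h1]
      have h2 := le_Amax n γ (show k ≤ n by omega)
      have h3 := mmin_le_Amax n γ
      omega
    · rw [reflW_high (by omega)]
      have h2 := mmin_le n γ (le_of_lt h1) (by omega)
      simp only
      omega
  · obtain ⟨w, hw1, hw2, hw3⟩ := mmin_exists n γ
    rcases lt_or_eq_of_le hw1 with hw | hw
    · have : (reflW n γ w).2 = 2 * Amax n γ - mmin n γ := by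
        rw [reflW_high (by omega)]
        simp only
        omega
      rw [← this]
      exact le_Amax n (reflW n γ) hw2
    · have hminA : mmin n γ = Amax n γ := by
        rw [← hw3, ← hw, tmax_spec n γ]
      have : (reflW n γ (tmax n γ)).2 = 2 * Amax n γ - mmin n γ := by
        rw [reflW_low le_rfl, tmax_spec n γ]
        omega
      rw [← this]
      exact le_Amax n (reflW n γ) (tmax_le n γ)

theorem tmax_reflW_gt (h : IsHSW n γ) (hn : 1 ≤ n) (ht : ¬ Amax n γ = (γ n).2) :
    tmax n γ < tmax n (reflW n γ) := by
  have hmA := (test_of_not_bridge h ht).1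
  have hAr : Amax n (reflW n γ) = 2 * Amax n γ - mmin n γ := Amax_reflW h hn
  by_contra hc
  push_neg at hc
  have := tmax_spec n (reflW n γ)
  rw [reflW_low hc] at this
  have := le_Amax n γ (le_trans hc (tmax_le n γ))
  omega

theorem Tspan_reflW_lt (h : IsHSW n γ) (hn : 1 ≤ n) (ht : ¬ Amax n γ = (γ n).2) :
    Tspan n (reflW n γ) < Tspan n γ := by
  have hgt := tmax_reflW_gt h hn ht
  have hAr : Amax n (reflW n γ) = 2 * Amax n γ - mmin n γ := Amax_reflW h hn
  have hm' : Amax n γ + 1 ≤ mmin n (reflW n γ) := by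
    apply le_mmin
    intro k hk1 hk2
    have hk3 : tmax n γ < k := by omega
    rw [reflW_high (by omega)]
    have := y_lt_of_gt_tmax n γ hk3 hk2
    simp only
    omega
  unfold Tspan
  omega

theorem reflW_inj {δ : ℕ → ℤ × ℤ} (hγ : IsHSW n γ) (hδ : IsHSW n δ) (hn : 1 ≤ n)
    (hA : Amax n γ = Amax n δ) (hR : reflW n γ = reflW n δ) : γ = δ := by
  have htt : tmax n γ = tmax n δ := by
    by_contra hc
    rcases Nat.lt_or_ge (tmax n γ) (tmax n δ) with hlt | hge
    · have h1 : (reflW n γ (tmax n δ)).2 > Amax n γ := by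
        rw [reflW_high (by omega)]
        have := y_lt_of_gt_tmax n γ hlt (tmax_le n δ)
        simp only
        omega
      have h2 : (reflW n δ (tmax n δ)).2 = Amax n γ := by
        rw [reflW_low le_rfl, tmax_spec n δ, hA]
      rw [hR] at h1
      omega
    · have hlt : tmax n δ < tmax n γ := by omega
      have h1 : (reflW n δ (tmax n γ)).2 > Amax n δ := by
        rw [reflW_high (by omega)]
        have := y_lt_of_gt_tmax n δ hlt (tmax_le n γ)
        simp only
        omega
      have h2 : (reflW n γ (tmax n γ)).2 = Amax n δ := by
        rw [reflW_low le_rfl, tmax_spec n γ, hA]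
      rw [hR] at h2
      omega
  funext k
  have hk := congrFun hR k
  rcases le_or_gt k (tmax n γ) with h1 | h1
  · rwa [reflW_low h1, reflW_low (htt ▸ h1)] at hk
  · rw [reflW_high (by omega), reflW_high (by omega : ¬ (k ≤ tmax n δ))] at hk
    have h3 := congrArg Prod.fst hk
    have h4 := congrArg Prod.snd hk
    simp only at h3 h4
    rw [hA] at h4
    exact Prod.ext h3 (by omega)

end Refl

/-! ### Invariants of the unfolding -/

theorem Amax_le_n {n : ℕ} {γ : ℕ → ℤ × ℤ} (h : IsSAW n γ) : Amax n γ ≤ (n : ℤ) := by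
  have h1 := h.y_le_self (tmax n γ) (tmax_le n γ)
  have h2 := tmax_spec n γ
  have h3 := tmax_le n γ
  have : ((tmax n γ : ℕ) : ℤ) ≤ (n : ℤ) := by exact_mod_cast h3
  omega

theorem unfoldW_spec (n : ℕ) (hn : 1 ≤ n) : ∀ (fuel : ℕ) (γ : ℕ → ℤ × ℤ), IsHSW n γ →
    Tspan n γ ≤ (fuel : ℤ) →
    IsBridge n ((unfoldW n fuel γ).2) ∧
    (∀ x ∈ (unfoldW n fuel γ).1, 1 ≤ x ∧ x ≤ Tspan n γ) ∧
    Amax n ((unfoldW n fuel γ).2) = Amax n γ + ((unfoldW n fuel γ).1).sum id := by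
  intro fuel
  induction fuel with
  | zero =>
    intro γ hγ hT
    have hbr : IsBridge n γ := by
      apply bridge_of_test hγ
      have h1 := mmin_le_yn n γ
      have h2 := le_Amax n γ (le_refl n)
      unfold Tspan at hT
      push_cast at hT
      omega
    simp only [unfoldW]
    exact ⟨hbr, by simp, by simp⟩
  | succ fuel ih =>
    intro γ hγ hT
    by_cases h : Amax n γ = (γ n).2
    · simp only [unfoldW, if_pos h]
      exact ⟨bridge_of_test hγ h, by simp, by simp⟩
    · simp only [unfoldW, if_neg h]
      have hR := reflW_isHSW hγ hn
      have hTlt := Tspan_reflW_lt hγ hn h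
      have hT' : Tspan n (reflW n γ) ≤ (fuel : ℤ) := by push_cast at hT ⊢; omega
      obtain ⟨ihb, ihel, ihsum⟩ := ih (reflW n γ) hR hT'
      have hnotmem : Tspan n γ ∉ (unfoldW n fuel (reflW n γ)).1 := by
        intro hmem
        have := (ihel _ hmem).2
        omega
      refine ⟨ihb, ?_, ?_⟩
      · intro x hx
        rcases Finset.mem_insert.mp hx with rfl | hx
        · exact ⟨Tspan_pos hγ h, le_rfl⟩
        · obtain ⟨hx1, hx2⟩ := ihel x hx
          exact ⟨hx1, by omega⟩
      · rw [Finset.sum_insert hnotmem, ihsum, Amax_reflW hγ hn]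
        unfold Tspan
        simp only [id_eq]
        ring

theorem unfoldW_inj (n : ℕ) (hn : 1 ≤ n) : ∀ (fuel : ℕ) (γ δ : ℕ → ℤ × ℤ),
    IsHSW n γ → IsHSW n δ → Tspan n γ ≤ (fuel : ℤ) → Tspan n δ ≤ (fuel : ℤ) →
    Amax n γ = Amax n δ → unfoldW n fuel γ = unfoldW n fuel δ → γ = δ := by
  intro fuel
  induction fuel with
  | zero =>
    intro γ δ _ _ _ _ _ h
    have := congrArg Prod.snd h
    simpa only [unfoldW] using this
  | succ fuel ih =>
    intro γ δ hγ hδ hTγ hTδ hA h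
    by_cases h1 : Amax n γ = (γ n).2 <;> by_cases h2 : Amax n δ = (δ n).2
    · simp only [unfoldW, if_pos h1, if_pos h2] at h
      exact congrArg Prod.snd h
    · exfalso
      simp only [unfoldW, if_pos h1, if_neg h2] at h
      have := congrArg Prod.fst h
      simp only at this
      exact (Finset.insert_ne_empty _ _) this.symm
    · exfalso
      simp only [unfoldW, if_neg h1, if_pos h2] at h
      have := congrArg Prod.fst h
      simp only at this
      exact (Finset.insert_ne_empty _ _) this
    · simp only [unfoldW, if_neg h1, if_neg h2] at h
      have hfst := congrArg Prod.fst h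
      have hsnd := congrArg Prod.snd h
      simp only at hfst hsnd
      have hRγ := reflW_isHSW hγ hn
      have hRδ := reflW_isHSW hδ hn
      have hltγ := Tspan_reflW_lt hγ hn h1
      have hltδ := Tspan_reflW_lt hδ hn h2
      have hTγ' : Tspan n (reflW n γ) ≤ (fuel:ℤ) := by push_cast at hTγ ⊢; omega
      have hTδ' : Tspan n (reflW n δ) ≤ (fuel:ℤ) := by push_cast at hTδ ⊢; omega
      obtain ⟨_, helγ, _⟩ := unfoldW_spec n hn fuel (reflW n γ) hRγ hTγ'
      obtain ⟨_, helδ, _⟩ := unfoldW_spec n hn fuel (reflW n δ) hRδ hTδ'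
      have hTT : Tspan n γ = Tspan n δ := by
        have m1 : Tspan n γ ∈ insert (Tspan n δ) (unfoldW n fuel (reflW n δ)).1 := by
          rw [← hfst]; exact Finset.mem_insert_self _ _
        have m2 : Tspan n δ ∈ insert (Tspan n γ) (unfoldW n fuel (reflW n γ)).1 := by
          rw [hfst]; exact Finset.mem_insert_self _ _
        rcases Finset.mem_insert.mp m1 with he | hm
        · exact he
        · have l1 := (helδ _ hm).2
          rcases Finset.mem_insert.mp m2 with he2 | hm2
          · exact he2.symm
          · have l2 := (helγ _ hm2).2
            omega
      have hng : Tspan n γ ∉ (unfoldW n fuel (reflW n γ)).1 := fun hm => by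
        have := (helγ _ hm).2; omega
      have hnd : Tspan n δ ∉ (unfoldW n fuel (reflW n δ)).1 := fun hm => by
        have := (helδ _ hm).2; omega
      have hS : (unfoldW n fuel (reflW n γ)).1 = (unfoldW n fuel (reflW n δ)).1 := by
        calc (unfoldW n fuel (reflW n γ)).1
            = (insert (Tspan n γ) (unfoldW n fuel (reflW n γ)).1).erase (Tspan n γ) :=
              (Finset.erase_insert hng).symm
          _ = (insert (Tspan n δ) (unfoldW n fuel (reflW n δ)).1).erase (Tspan n γ) := by
              rw [hfst]
          _ = (unfoldW n fuel (reflW n δ)).1 := by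
              rw [hTT]; exact Finset.erase_insert hnd
      have hAr : Amax n (reflW n γ) = Amax n (reflW n δ) := by
        rw [Amax_reflW hγ hn, Amax_reflW hδ hn]
        unfold Tspan at hTT
        omega
      have hre := ih (reflW n γ) (reflW n δ) hRγ hRδ hTγ' hTδ' hAr (Prod.ext hS hsnd)
      exact reflW_inj hγ hδ hn hA hre

/-! ### Counting half-space walks -/

noncomputable def partFinset (n : ℕ) : Finset (Finset ℤ) :=
  ((Finset.Icc (1:ℤ) (n:ℤ)).powerset).filter (fun S => S.sum id ≤ (n:ℤ))

theorem cHSW_le_part_mul_cSAB (n : ℕ) (hn : 1 ≤ n) :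
    cHSW n ≤ (partFinset n).card * cSAB n := by
  classical
  have hTle : ∀ γ : ℕ → ℤ × ℤ, IsHSW n γ → Tspan n γ ≤ (n : ℤ) := by
    intro γ hγ
    have h1 := Amax_le_n hγ.1
    have h2 := mmin_pos hγ hn
    unfold Tspan
    omega
  have hkey : ∀ γ : ℕ → ℤ × ℤ, IsHSW n γ →
      insert (Amax n γ) (unfoldW n n γ).1 ∈ partFinset n ∧ IsBridge n ((unfoldW n n γ).2) := by
    intro γ hγ
    obtain ⟨hbr, hel, hsum⟩ := unfoldW_spec n hn n γ hγ (hTle γ hγ)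
    have hApos := Amax_pos hγ hn
    have hAle := Amax_le_n hγ.1
    have hmpos := mmin_pos hγ hn
    have hTA : Tspan n γ < Amax n γ := by unfold Tspan; omega
    have hnotmem : Amax n γ ∉ (unfoldW n n γ).1 := fun hm => by
      have := (hel _ hm).2; omega
    refine ⟨Finset.mem_filter.mpr ⟨Finset.mem_powerset.mpr ?_, ?_⟩, hbr⟩
    · intro x hx
      rcases Finset.mem_insert.mp hx with rfl | hx
      · exact Finset.mem_Icc.mpr ⟨hApos, hAle⟩
      · obtain ⟨hx1, hx2⟩ := hel x hx
        exact Finset.mem_Icc.mpr ⟨hx1, by omega⟩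
    · rw [Finset.sum_insert hnotmem]
      have hy : ((unfoldW n n γ).2 n).2 ≤ (n : ℤ) := by
        have := hbr.1.y_le_self n le_rfl
        exact_mod_cast this
      have hAeq := Amax_eq_yn_of_bridge hbr
      simp only [id] at *
      omega
  have hinj : Function.Injective (fun γ : {γ : ℕ → ℤ × ℤ // IsHSW n γ} =>
      ((⟨insert (Amax n γ.1) (unfoldW n n γ.1).1, (hkey γ.1 γ.2).1⟩ :
          {S : Finset ℤ // S ∈ partFinset n}),
       (⟨(unfoldW n n γ.1).2, (hkey γ.1 γ.2).2⟩ : {β : ℕ → ℤ × ℤ // IsBridge n β}))) := by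
    rintro ⟨γ, hγ⟩ ⟨δ, hδ⟩ h
    have hS : insert (Amax n γ) (unfoldW n n γ).1 = insert (Amax n δ) (unfoldW n n δ).1 :=
      congrArg (fun p : {S : Finset ℤ // S ∈ partFinset n} ×
        {β : ℕ → ℤ × ℤ // IsBridge n β} => p.1.1) h
    have hβ : (unfoldW n n γ).2 = (unfoldW n n δ).2 :=
      congrArg (fun p : {S : Finset ℤ // S ∈ partFinset n} ×
        {β : ℕ → ℤ × ℤ // IsBridge n β} => p.2.1) h
    obtain ⟨_, helγ, _⟩ := unfoldW_spec n hn n γ hγ (hTle γ hγ)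
    obtain ⟨_, helδ, _⟩ := unfoldW_spec n hn n δ hδ (hTle δ hδ)
    have hTAγ : Tspan n γ < Amax n γ := by
      have := mmin_pos hγ hn; unfold Tspan; omega
    have hTAδ : Tspan n δ < Amax n δ := by
      have := mmin_pos hδ hn; unfold Tspan; omega
    have hngγ : Amax n γ ∉ (unfoldW n n γ).1 := fun hm => by
      have := (helγ _ hm).2; omega
    have hngδ : Amax n δ ∉ (unfoldW n n δ).1 := fun hm => by
      have := (helδ _ hm).2; omega
    have hA : Amax n γ = Amax n δ := by
      have m1 : Amax n γ ∈ insert (Amax n δ) (unfoldW n n δ).1 := by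
        rw [← hS]; exact Finset.mem_insert_self _ _
      have m2 : Amax n δ ∈ insert (Amax n γ) (unfoldW n n γ).1 := by
        rw [hS]; exact Finset.mem_insert_self _ _
      rcases Finset.mem_insert.mp m1 with he | hm
      · exact he
      · have l1 := (helδ _ hm).2
        rcases Finset.mem_insert.mp m2 with he2 | hm2
        · exact he2.symm
        · have l2 := (helγ _ hm2).2
          omega
    have hS2 : (unfoldW n n γ).1 = (unfoldW n n δ).1 := by
      calc (unfoldW n n γ).1
          = (insert (Amax n γ) (unfoldW n n γ).1).erase (Amax n γ) :=
            (Finset.erase_insert hngγ).symm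
        _ = (insert (Amax n δ) (unfoldW n n δ).1).erase (Amax n γ) := by rw [hS]
        _ = (unfoldW n n δ).1 := by rw [hA]; exact Finset.erase_insert hngδ
    have := unfoldW_inj n hn n γ δ hγ hδ (hTle γ hγ) (hTle δ hδ) hA (Prod.ext hS2 hβ)
    exact Subtype.ext this
  calc cHSW n
      ≤ Nat.card ({S : Finset ℤ // S ∈ partFinset n} × {β : ℕ → ℤ × ℤ // IsBridge n β}) :=
        Nat.card_le_card_of_injective _ hinj
    _ = Nat.card {S : Finset ℤ // S ∈ partFinset n} * cSAB n := Nat.card_prod _ _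
    _ = (partFinset n).card * cSAB n := by rw [Nat.card_eq_finsetCard]

/-! ### Counting partitions into distinct parts -/

theorem zpow_finset_sum (x : ℝ) (hx : x ≠ 0) (S : Finset ℤ) :
    x ^ (S.sum id) = ∏ k ∈ S, x ^ k := by
  classical
  induction S using Finset.induction_on with
  | empty => simp
  | insert _ _ hmem ih =>
    rw [Finset.sum_insert hmem, Finset.prod_insert hmem, zpow_add₀ hx, ih]
    simp [id_eq]

theorem Icc_int_eq_image (n : ℕ) :
    Finset.Icc (1:ℤ) (n:ℤ) = Finset.image (fun j : ℕ => (j:ℤ)+1) (Finset.range n) := by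
  ext k
  simp only [Finset.mem_Icc, Finset.mem_image, Finset.mem_range]
  constructor
  · rintro ⟨h1, h2⟩
    refine ⟨(k-1).toNat, ?_, ?_⟩ <;> omega
  · rintro ⟨j, hj, rfl⟩
    omega

theorem sum_zpow_Icc_le (x : ℝ) (hx0 : 0 < x) (hx1 : x < 1) (n : ℕ) :
    ∑ k ∈ Finset.Icc (1:ℤ) (n:ℤ), x ^ k ≤ x / (1 - x) := by
  rw [Icc_int_eq_image n, Finset.sum_image (by intro a _ b _ h; have h' : (a:ℤ)+1 = (b:ℤ)+1 := h; omega)]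
  have hxe : ∀ j : ℕ, x ^ ((j:ℤ)+1) = x * x ^ j := by
    intro j
    rw [(by push_cast; ring : (j:ℤ)+1 = ((j+1 : ℕ) : ℤ)), zpow_natCast]
    ring
  simp only [hxe]
  rw [← Finset.mul_sum]
  rw [geom_sum_eq (by linarith : x ≠ 1) n]
  have h1 : (x ^ n - 1)/(x - 1) = (1 - x ^ n)/(1 - x) := by
    rw [div_eq_div_iff (by linarith) (by linarith)]
    ring
  rw [h1]
  have h2 : (1 - x ^ n)/(1 - x) ≤ 1 / (1 - x) := by
    apply div_le_div_of_nonneg_right ?_ (by linarith)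
    · have := pow_nonneg hx0.le n
      linarith
  calc x * ((1 - x ^ n)/(1 - x)) ≤ x * (1 / (1-x)) := by
        exact mul_le_mul_of_nonneg_left h2 hx0.le
    _ = x / (1-x) := by ring

theorem partFinset_card_le (n : ℕ) (hn : 1 ≤ n) :
    ((partFinset n).card : ℝ) ≤ Real.exp (2 * Real.sqrt n) := by
  classical
  set t : ℝ := 1 / Real.sqrt n with ht_def
  have hsq : 0 < Real.sqrt n := Real.sqrt_pos.mpr (by exact_mod_cast hn)
  have ht : 0 < t := by positivity
  set x : ℝ := Real.exp (-t) with hx_def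
  have hx0 : 0 < x := Real.exp_pos _
  have hx1 : x < 1 := Real.exp_lt_one_iff.mpr (by linarith)
  have hA : ((partFinset n).card : ℝ) * x ^ (n:ℤ) ≤
      ∏ k ∈ Finset.Icc (1:ℤ) (n:ℤ), (x ^ k + 1) := by
    have h2 : ((partFinset n).card : ℝ) * x ^ (n:ℤ) = ∑ _S ∈ partFinset n, x ^ (n:ℤ) := by
      rw [Finset.sum_const, nsmul_eq_mul]
    rw [h2]
    have h3 : ∑ _S ∈ partFinset n, x ^ (n:ℤ) ≤ ∑ S ∈ partFinset n, x ^ (S.sum id) := by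
      apply Finset.sum_le_sum
      intro S hS
      have hsum := (Finset.mem_filter.mp hS).2
      exact zpow_le_zpow_right_of_le_one₀ hx0 hx1.le hsum
    have h4 : ∑ S ∈ partFinset n, x ^ (S.sum id) ≤
        ∑ S ∈ (Finset.Icc (1:ℤ) (n:ℤ)).powerset, x ^ (S.sum id) := by
      apply Finset.sum_le_sum_of_subset_of_nonneg (Finset.filter_subset _ _)
      intro S _ _
      positivity
    have h5 : ∏ k ∈ Finset.Icc (1:ℤ) (n:ℤ), (x ^ k + 1) =
        ∑ S ∈ (Finset.Icc (1:ℤ) (n:ℤ)).powerset, x ^ (S.sum id) := by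
      rw [Finset.prod_add]
      apply Finset.sum_congr rfl
      intro S _
      rw [Finset.prod_const_one, mul_one, zpow_finset_sum x hx0.ne' S]
    rw [h5]
    exact le_trans h3 h4
  have hB : ∏ k ∈ Finset.Icc (1:ℤ) (n:ℤ), (x ^ k + 1) ≤ Real.exp (1 / t) := by
    have h1 : ∏ k ∈ Finset.Icc (1:ℤ) (n:ℤ), (x ^ k + 1) ≤
        ∏ k ∈ Finset.Icc (1:ℤ) (n:ℤ), Real.exp (x ^ k) := by
      apply Finset.prod_le_prod
      · intro k _; positivity
      · intro k _; exact Real.add_one_le_exp _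
    have h2 : ∏ k ∈ Finset.Icc (1:ℤ) (n:ℤ), Real.exp (x ^ k) =
        Real.exp (∑ k ∈ Finset.Icc (1:ℤ) (n:ℤ), x ^ k) := (Real.exp_sum _ _).symm
    have h3 : Real.exp (∑ k ∈ Finset.Icc (1:ℤ) (n:ℤ), x ^ k) ≤ Real.exp (x / (1-x)) :=
      Real.exp_le_exp.mpr (sum_zpow_Icc_le x hx0 hx1 n)
    have hxt : x / (1 - x) ≤ 1 / t := by
      have hkey : x * (t + 1) ≤ 1 := by
        have h5 := Real.add_one_le_exp t
        have h6 : x * (t+1) ≤ x * Real.exp t := mul_le_mul_of_nonneg_left h5 hx0.le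
        have h7 : x * Real.exp t = 1 := by
          rw [hx_def, ← Real.exp_add]
          simp
        linarith
      rw [div_le_div_iff₀ (by linarith) ht]
      nlinarith
    have h4 : Real.exp (x / (1-x)) ≤ Real.exp (1 / t) := Real.exp_le_exp.mpr hxt
    linarith
  -- combine
  have hxn : x ^ (n:ℤ) = Real.exp (-(t * n)) := by
    rw [zpow_natCast, hx_def, ← Real.exp_nat_mul]
    congr 1
    ring
  have hcard : ((partFinset n).card : ℝ) ≤ Real.exp (1 / t) / x ^ (n:ℤ) := by
    rw [le_div_iff₀ (by positivity)]
    exact le_trans hA hB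
  have hfin : Real.exp (1 / t) / x ^ (n:ℤ) = Real.exp (1 / t + t * n) := by
    rw [hxn, ← Real.exp_sub]
    congr 1
    ring
  have h1t : 1 / t = Real.sqrt n := by
    rw [ht_def, one_div_one_div]
  have htn : t * n = Real.sqrt n := by
    rw [ht_def]
    rw [div_mul_eq_mul_div, one_mul, div_eq_iff hsq.ne']
    exact (Real.mul_self_sqrt (by positivity)).symm
  rw [hfin, h1t, htn, (by ring : Real.sqrt n + Real.sqrt n = 2 * Real.sqrt n)] at hcard
  exact hcard

/-! ### Putting everything together -/

theorem cHSW_bound (m : ℕ) : (cHSW m : ℝ) ≤ Real.exp (2 * Real.sqrt m) * mu ^ m := by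
  rcases Nat.eq_zero_or_pos m with rfl | hm
  · simp only [Nat.cast_zero, Real.sqrt_zero, mul_zero, Real.exp_zero, pow_zero, one_mul]
    exact_mod_cast cHSW_zero_le
  · have ha : (cHSW m : ℝ) ≤ ((partFinset m).card : ℝ) * (cSAB m : ℝ) := by
      exact_mod_cast cHSW_le_part_mul_cSAB m hm
    have hb : ((partFinset m).card : ℝ) * (cSAB m : ℝ) ≤ Real.exp (2 * Real.sqrt m) * mu ^ m :=
      mul_le_mul (partFinset_card_le m hm) (cSAB_le_mu_pow m) (by positivity)
        (Real.exp_nonneg _)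
    linarith

theorem hammersley_welsh_aux :
    ∃ C : ℝ, 0 < C ∧ ∀ n : ℕ, 1 ≤ n →
      (cSAW n : ℝ) ≤ Real.exp (C * Real.sqrt n) * mu ^ n := by
  refine ⟨11 + (cSAW 1 : ℝ), by positivity, ?_⟩
  intro n hn
  have hsqn : 1 ≤ Real.sqrt n := by
    rw [show (1:ℝ) = Real.sqrt 1 by simp]
    exact Real.sqrt_le_sqrt (by exact_mod_cast hn)
  have hsq0 : 0 ≤ Real.sqrt n := by positivity
  have hmu0 : 0 < mu := mu_pos
  -- bound each summand
  have hterm : ∀ i : ℕ, i ∈ Finset.range (n+1) →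
      (cHSW (i+1) : ℝ) * (cHSW (n-i) : ℝ) ≤
        Real.exp (6 * Real.sqrt n) * mu ^ (n+1) := by
    intro i hi
    have hi' : i ≤ n := by have := Finset.mem_range.mp hi; omega
    have h1 : (cHSW (i+1) : ℝ) ≤ Real.exp (2 * Real.sqrt ((i:ℝ)+1)) * mu ^ (i+1) := by
      have := cHSW_bound (i+1)
      have hcast : ((i+1 : ℕ) : ℝ) = (i:ℝ)+1 := by push_cast; ring
      rwa [hcast] at this
    have h2 : (cHSW (n-i) : ℝ) ≤ Real.exp (2 * Real.sqrt ((n-i : ℕ) : ℝ)) * mu ^ (n-i) :=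
      cHSW_bound (n-i)
    have hs1 : Real.sqrt ((i:ℝ)+1) ≤ 2 * Real.sqrt n := by
      have e1 : Real.sqrt (4*(n:ℝ)) = 2 * Real.sqrt n := by
        rw [show (4:ℝ)*(n:ℝ) = (2:ℝ)^2 * n by ring, Real.sqrt_mul (by positivity),
          Real.sqrt_sq (by norm_num)]
      rw [← e1]
      apply Real.sqrt_le_sqrt
      have hc1 : (1:ℝ) ≤ (n:ℝ) := by exact_mod_cast hn
      have hc2 : (i:ℝ) ≤ (n:ℝ) := by exact_mod_cast hi'
      linarith
    have hs2 : Real.sqrt ((n-i : ℕ) : ℝ) ≤ Real.sqrt n := by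
      apply Real.sqrt_le_sqrt
      exact_mod_cast Nat.sub_le n i
    calc (cHSW (i+1) : ℝ) * (cHSW (n-i) : ℝ)
        ≤ (Real.exp (2 * Real.sqrt ((i:ℝ)+1)) * mu ^ (i+1)) *
          (Real.exp (2 * Real.sqrt ((n-i : ℕ) : ℝ)) * mu ^ (n-i)) := by
          apply mul_le_mul h1 h2 (by positivity) (by positivity)
      _ = Real.exp (2 * Real.sqrt ((i:ℝ)+1) + 2 * Real.sqrt ((n-i : ℕ):ℝ)) * mu ^ ((i+1) + (n-i)) := by
          rw [Real.exp_add, pow_add]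
          push_cast
          ring
      _ ≤ Real.exp (6 * Real.sqrt n) * mu ^ (n+1) := by
          have hexp : (2:ℝ) * Real.sqrt ((i:ℝ)+1) + 2 * Real.sqrt ((n-i : ℕ):ℝ)
              ≤ 6 * Real.sqrt n := by linarith
          have hpow : (i+1) + (n-i) = n+1 := by omega
          rw [hpow]
          apply mul_le_mul_of_nonneg_right (Real.exp_le_exp.mpr hexp) (by positivity)
  have hsum : (cSAW n : ℝ) ≤ (n+1 : ℝ) * (Real.exp (6 * Real.sqrt n) * mu ^ (n+1)) := by
    have hstep := cSAW_le_sum_cHSW n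
    have hcast : (cSAW n : ℝ) ≤ ∑ i ∈ Finset.range (n+1), (cHSW (i+1) : ℝ) * (cHSW (n-i) : ℝ) := by
      have : ((cSAW n : ℕ) : ℝ) ≤ ((∑ i ∈ Finset.range (n+1), cHSW (i+1) * cHSW (n-i) : ℕ) : ℝ) := by
        exact_mod_cast hstep
      push_cast at this
      exact this
    calc (cSAW n : ℝ) ≤ ∑ i ∈ Finset.range (n+1), (cHSW (i+1) : ℝ) * (cHSW (n-i) : ℝ) := hcast
      _ ≤ ∑ _i ∈ Finset.range (n+1), Real.exp (6 * Real.sqrt n) * mu ^ (n+1) :=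
          Finset.sum_le_sum hterm
      _ = (n+1 : ℝ) * (Real.exp (6 * Real.sqrt n) * mu ^ (n+1)) := by
          rw [Finset.sum_const, Finset.card_range, nsmul_eq_mul]
          push_cast
          ring
  -- absorb the factors
  have hn1 : (n+1 : ℝ) ≤ Real.exp (2 * Real.sqrt n) := by
    have h1 : (1:ℝ) + Real.sqrt n ≤ Real.exp (Real.sqrt n) := by
      have := Real.add_one_le_exp (Real.sqrt n)
      linarith
    have h2 : ((n:ℝ)+1) ≤ (1 + Real.sqrt n)^2 := by
      have := Real.sq_sqrt (show (0:ℝ) ≤ n by positivity)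
      nlinarith
    calc ((n:ℝ)+1) ≤ (1 + Real.sqrt n)^2 := h2
      _ ≤ (Real.exp (Real.sqrt n))^2 := by
          apply pow_le_pow_left₀ (by positivity) h1
      _ = Real.exp (2 * Real.sqrt n) := by
          rw [← Real.exp_nat_mul]
          norm_num
  have hmuB : mu ≤ Real.exp ((cSAW 1 : ℝ) * Real.sqrt n) := by
    have h1 : mu ≤ (cSAW 1 : ℝ) := mu_le_cSAW_one
    have h2 : (cSAW 1 : ℝ) ≤ Real.exp (cSAW 1 : ℝ) := by
      have := Real.add_one_le_exp (cSAW 1 : ℝ)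
      linarith
    have h3 : Real.exp (cSAW 1 : ℝ) ≤ Real.exp ((cSAW 1 : ℝ) * Real.sqrt n) := by
      apply Real.exp_le_exp.mpr
      nlinarith [Nat.cast_nonneg (α := ℝ) (cSAW 1)]
    linarith
  calc (cSAW n : ℝ) ≤ (n+1 : ℝ) * (Real.exp (6 * Real.sqrt n) * mu ^ (n+1)) := hsum
    _ = ((n+1 : ℝ) * Real.exp (6 * Real.sqrt n) * mu) * mu ^ n := by ring
    _ ≤ (Real.exp (2 * Real.sqrt n) * Real.exp (6 * Real.sqrt n) *
          Real.exp ((cSAW 1 : ℝ) * Real.sqrt n)) * mu ^ n := by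
        apply mul_le_mul_of_nonneg_right ?_ (by positivity)
        apply mul_le_mul ?_ hmuB hmu0.le (by positivity)
        apply mul_le_mul_of_nonneg_right hn1 (Real.exp_nonneg _)
    _ = Real.exp ((8 + (cSAW 1 : ℝ)) * Real.sqrt n) * mu ^ n := by
        rw [← Real.exp_add, ← Real.exp_add]
        congr 1
        ring
    _ ≤ Real.exp ((11 + (cSAW 1 : ℝ)) * Real.sqrt n) * mu ^ n := by
        apply mul_le_mul_of_nonneg_right ?_ (by positivity)
        apply Real.exp_le_exp.mpr
        nlinarith


/-- The Hammersley–Welsh theorem on `ℤ²`: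
`|SAW_n| ≤ exp(C n^{1/2}) μ^n` for all `n ∈ ℕ`. -/
theorem hammersley_welsh :
    ∃ C : ℝ, 0 < C ∧ ∀ n : ℕ, 1 ≤ n →
      (cSAW n : ℝ) ≤ Real.exp (C * Real.sqrt n) * mu ^ n := hammersley_welsh_aux
end
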